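/- arXiv:2305.15125 — 6 statements merged into one kernel-verified Lean document; each statement's English description precedes it below -/
import Mathlib

section
/- Let S be a subset of {0,1}^n with n ≥ 2, and let x be a point in the convex hull of S. Then there exists v* ∈ S such that ‖x − v*‖_∞ ≤ 1 − 1/n. -/
/-- Unit-cube lemma: for S ⊆ {0,1}^n (n ≥ 2) and x ∈ conv(S), some v* ∈ S
satisfies ‖x − v*‖_∞ ≤ 1 − 1/n.  (Fin n → ℝ carries the sup norm.) -/
theorem stmt0 {n : ℕ} (hn : 2 ≤ n) (S : Set (Fin n → ℝ))
    (hS : ∀ v ∈ S, ∀ i, v i = 0 ∨ v i = 1)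
    (x : Fin n → ℝ) (hx : x ∈ convexHull ℝ S) :
    ∃ v ∈ S, ‖x - v‖ ≤ 1 - 1 / n := by
  by_contra hcon
  push_neg at hcon
  have hn2 : (2:ℝ) ≤ (n:ℝ) := by exact_mod_cast hn
  have hnpos : (0:ℝ) < (n:ℝ) := by linarith
  have h1n : (1:ℝ)/n ≤ 1 - 1/n := by
    rw [div_le_iff₀ hnpos, sub_mul, one_mul, div_mul_cancel₀ _ (ne_of_gt hnpos)]
    linarith
  have hc0 : (0:ℝ) ≤ 1 - 1/n := le_trans (by positivity) h1n
  rw [convexHull_eq] at hx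
  obtain ⟨ι, t, w, z, hw0, hw1, hzS, hxeq⟩ := hx
  have hz01 : ∀ k ∈ t, ∀ i, z k i = 0 ∨ z k i = 1 := fun k hk i => hS _ (hzS k hk) i
  have hz0 : ∀ k ∈ t, ∀ i, 0 ≤ z k i := by
    intro k hk i; rcases hz01 k hk i with h | h <;> rw [h] <;> norm_num
  have hz1 : ∀ k ∈ t, ∀ i, z k i ≤ 1 := by
    intro k hk i; rcases hz01 k hk i with h | h <;> rw [h] <;> norm_num
  have hxi : ∀ i, x i = ∑ k ∈ t, w k * z k i := by
    intro i
    rw [← hxeq, Finset.centerMass_eq_of_sum_1 _ _ hw1]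
    simp [Finset.sum_apply]
  have hx0 : ∀ i, 0 ≤ x i := by
    intro i; rw [hxi i]
    exact Finset.sum_nonneg fun k hk => mul_nonneg (hw0 k hk) (hz0 k hk i)
  have hx1 : ∀ i, x i ≤ 1 := by
    intro i; rw [hxi i, ← hw1]
    exact Finset.sum_le_sum fun k hk => by
      nlinarith [hw0 k hk, hz1 k hk i]
  set B : Finset (Fin n) := Finset.univ.filter (fun i => 1 - 1/(n:ℝ) < x i) with hB
  set C : Finset (Fin n) := Finset.univ.filter (fun i => x i < 1/(n:ℝ)) with hC
  set F : (Fin n → ℝ) → ℝ := fun v => (∑ i ∈ B, (1 - v i)) + ∑ i ∈ C, v i with hF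
  -- every vertex in the support has F ≥ 1
  have hFz1 : ∀ k ∈ t, w k ≠ 0 → 1 ≤ F (z k) := by
    intro k hk hwk
    have hnorm : 1 - 1/(n:ℝ) < ‖x - z k‖ := hcon _ (hzS k hk)
    have hbad : ∃ i, 1 - 1/(n:ℝ) < |x i - z k i| := by
      by_contra hb
      push_neg at hb
      have : ‖x - z k‖ ≤ 1 - 1/(n:ℝ) := by
        rw [pi_norm_le_iff_of_nonneg hc0]
        intro i
        simpa [Real.norm_eq_abs] using hb i
      linarith
    obtain ⟨i, hi⟩ := hbad
    have hsum1 : ∀ j ∈ B, 0 ≤ 1 - z k j := fun j _ => by linarith [hz1 k hk j]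
    have hsum2 : ∀ j ∈ C, 0 ≤ z k j := fun j _ => hz0 k hk j
    rcases hz01 k hk i with h0 | h1
    · have hxB : i ∈ B := by
        rw [hB, Finset.mem_filter]
        refine ⟨Finset.mem_univ _, ?_⟩
        have := hx0 i
        rw [h0] at hi
        rw [abs_of_nonneg (by linarith : (0:ℝ) ≤ x i - 0)] at hi
        linarith
      have hle : 1 ≤ ∑ j ∈ B, (1 - z k j) := by
        have := Finset.single_le_sum hsum1 hxB
        rw [h0] at this; linarith
      have h2 : 0 ≤ ∑ j ∈ C, z k j := Finset.sum_nonneg hsum2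
      simp only [hF]; linarith
    · have hxC : i ∈ C := by
        rw [hC, Finset.mem_filter]
        refine ⟨Finset.mem_univ _, ?_⟩
        have := hx1 i
        rw [h1] at hi
        rw [abs_of_nonpos (by linarith : x i - 1 ≤ 0)] at hi
        linarith
      have hle : 1 ≤ ∑ j ∈ C, z k j := by
        have := Finset.single_le_sum hsum2 hxC
        rw [h1] at this; linarith
      have h1' : 0 ≤ ∑ j ∈ B, (1 - z k j) := Finset.sum_nonneg hsum1
      simp only [hF]; linarith
  -- the key identity : F x = ∑ w k * F (z k)
  have hkey : F x = ∑ k ∈ t, w k * F (z k) := by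
    simp only [hF]
    have e1 : ∑ i ∈ B, (1 - x i) = ∑ k ∈ t, w k * ∑ i ∈ B, (1 - z k i) := by
      have : ∀ i, 1 - x i = ∑ k ∈ t, w k * (1 - z k i) := by
        intro i
        simp only [mul_one_sub, Finset.sum_sub_distrib, hw1, hxi i]
      rw [Finset.sum_congr rfl fun i _ => this i, Finset.sum_comm]
      exact Finset.sum_congr rfl fun k _ => (Finset.mul_sum _ _ _).symm
    have e2 : ∑ i ∈ C, x i = ∑ k ∈ t, w k * ∑ i ∈ C, z k i := by
      rw [Finset.sum_congr rfl fun i _ => hxi i, Finset.sum_comm]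
      exact Finset.sum_congr rfl fun k _ => (Finset.mul_sum _ _ _).symm
    rw [e1, e2, ← Finset.sum_add_distrib]
    exact Finset.sum_congr rfl fun k _ => (mul_add _ _ _).symm
  -- lower bound
  have hlow : (1:ℝ) ≤ F x := by
    rw [hkey, ← hw1]
    refine Finset.sum_le_sum fun k hk => ?_
    rcases eq_or_ne (w k) 0 with h | h
    · simp [h]
    · nlinarith [hFz1 k hk h, hw0 k hk]
  -- upper bound
  have hdisj : Disjoint B C := by
    rw [Finset.disjoint_left]
    intro i hiB hiC
    rw [hB, Finset.mem_filter] at hiB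
    rw [hC, Finset.mem_filter] at hiC
    linarith [hiB.2, hiC.2]
  set g : Fin n → ℝ := fun i => if 1 - 1/(n:ℝ) < x i then 1 - x i else x i with hg
  have eB : ∑ i ∈ B, (1 - x i) = ∑ i ∈ B, g i := by
    refine Finset.sum_congr rfl fun i hi => ?_
    rw [hB, Finset.mem_filter] at hi
    simp only [hg]
    rw [if_pos hi.2]
  have eC : ∑ i ∈ C, x i = ∑ i ∈ C, g i := by
    refine Finset.sum_congr rfl fun i hi => ?_
    rw [hC, Finset.mem_filter] at hi
    have : ¬ (1 - 1/(n:ℝ) < x i) := by linarith [hi.2]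
    simp only [hg]
    rw [if_neg this]
  have hFxU : F x = ∑ i ∈ B ∪ C, g i := by
    rw [Finset.sum_union hdisj, hF]
    simp only [eB, eC]
  have hup : F x < 1 := by
    rcases (B ∪ C).eq_empty_or_nonempty with he | hne
    · rw [hFxU, he]; simp
    · have hlt : ∀ i ∈ B ∪ C, g i < 1/(n:ℝ) := by
        intro i hi
        rcases Finset.mem_union.mp hi with hiB | hiC
        · rw [hB, Finset.mem_filter] at hiB
          simp only [hg, if_pos hiB.2]
          linarith [hiB.2]
        · rw [hC, Finset.mem_filter] at hiC
          have hcond : ¬ (1 - 1/(n:ℝ) < x i) := by linarith [hiC.2]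
          simp only [hg, if_neg hcond]
          exact hiC.2
      have h1 : F x < ∑ _i ∈ B ∪ C, 1/(n:ℝ) := by
        rw [hFxU]
        exact Finset.sum_lt_sum_of_nonempty hne hlt
      -- combine
      have h2 : ∑ _i ∈ B ∪ C, 1/(n:ℝ) = ((B ∪ C).card : ℝ) * (1/(n:ℝ)) := by
        rw [Finset.sum_const, nsmul_eq_mul]
      have h3 : ((B ∪ C).card : ℝ) ≤ (n:ℝ) := by
        have h := Finset.card_le_univ (B ∪ C)
        simp only [Finset.card_univ, Fintype.card_fin] at h
        exact_mod_cast h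
      have h4 : ((B ∪ C).card : ℝ) * (1/(n:ℝ)) ≤ 1 := by
        rw [mul_one_div, div_le_one hnpos]; exact h3
      rw [h2] at h1
      exact h1.trans_le h4
  linarith
end

section
/- Let S ⊆ {0,1}^n, let x be in the convex hull of S, written x = Σ_{u∈S} λ_u u with λ_u ≥ 0 summing to 1. If λ_v ≥ 1/n for some v ∈ S, then ‖x − v‖_∞ ≤ 1 − 1/n. -/
open scoped BigOperators

/-- If x = Σ_{u∈S} λ_u u is a convex combination of 0-1 vectors and
λ_v ≥ 1/n for some v ∈ S, then ‖x − v‖_∞ ≤ 1 − 1/n. -/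
theorem stmt1 {n : ℕ} (S : Finset (Fin n → ℝ))
    (hS : ∀ v ∈ S, ∀ i, v i = 0 ∨ v i = 1)
    (lam : (Fin n → ℝ) → ℝ) (hnn : ∀ u ∈ S, 0 ≤ lam u)
    (hsum : ∑ u ∈ S, lam u = 1)
    (x : Fin n → ℝ) (hx : x = ∑ u ∈ S, lam u • u)
    (v : Fin n → ℝ) (hv : v ∈ S) (hlam : 1 / (n : ℝ) ≤ lam v) :
    ‖x - v‖ ≤ 1 - 1 / n := by
  have h0 : (0:ℝ) ≤ 1 - 1/n := by
    rcases Nat.eq_zero_or_pos n with h | h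
    · simp [h]
    · have h1 : (1:ℝ)/n ≤ 1 := by
        rw [div_le_one (by positivity)]
        exact_mod_cast h
      linarith
  rw [pi_norm_le_iff_of_nonneg h0]
  intro i
  have hxv : (x - v) i = ∑ u ∈ S, lam u * (u i - v i) := by
    subst hx
    simp only [Pi.sub_apply, Finset.sum_apply, Pi.smul_apply, smul_eq_mul, mul_sub]
    rw [Finset.sum_sub_distrib, ← Finset.sum_mul, hsum, one_mul]
  rw [Real.norm_eq_abs, hxv]
  have key : |∑ u ∈ S, lam u * (u i - v i)| ≤ ∑ u ∈ S \ {v}, lam u := by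
    rw [show (∑ u ∈ S, lam u * (u i - v i)) = ∑ u ∈ S \ {v}, lam u * (u i - v i) by
      rw [Finset.sum_sdiff_eq_sub (Finset.singleton_subset_iff.2 hv)]
      simp]
    calc |∑ u ∈ S \ {v}, lam u * (u i - v i)| ≤ ∑ u ∈ S \ {v}, |lam u * (u i - v i)| :=
          Finset.abs_sum_le_sum_abs _ _
      _ ≤ ∑ u ∈ S \ {v}, lam u := by
          apply Finset.sum_le_sum
          intro u hu
          have huS := Finset.mem_sdiff.1 hu |>.1
          have h1 : |u i - v i| ≤ 1 := by
            rcases hS u huS i with h | h <;> rcases hS v hv i with h' | h' <;>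
              rw [h, h'] <;> norm_num
          rw [abs_mul, abs_of_nonneg (hnn u huS)]
          calc lam u * |u i - v i| ≤ lam u * 1 :=
                mul_le_mul_of_nonneg_left h1 (hnn u huS)
            _ = lam u := mul_one _
  have hsplit : ∑ u ∈ S \ {v}, lam u = 1 - lam v := by
    rw [Finset.sum_sdiff_eq_sub (Finset.singleton_subset_iff.2 hv), hsum]
    simp
  rw [hsplit] at key
  linarith
end

section
/- (Shapley–Folkman lemma) Let S_1, …, S_m be nonempty subsets of ℝ^n and W = S_1 + ⋯ + S_m their Minkowski sum. For any x in the convex hull of W, there exists a subset I of {1,…,m} with |I| ≤ min(n,m) and points such that x ∈ conv(Σ_{i∈I} S_i) + Σ_{j∉I} S_j, i.e., x is the sum of an element of the convex hull of the Minkowski sum over I and elements z_j ∈ S_j for each j ∉ I. -/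
open scoped BigOperators Pointwise

noncomputable section

/-- Coercion of an integer vector to a real vector (sup-norm space). -/
def coeZR {n : ℕ} (v : Fin n → ℤ) : Fin n → ℝ := fun i => (v i : ℝ)

/-- Minkowski sum of a finite family of subsets of ℝ^n. -/
def minkSum {n m : ℕ} (S : Fin m → Set (Fin n → ℝ)) : Set (Fin n → ℝ) :=
  {x | ∃ z : Fin m → (Fin n → ℝ), (∀ i, z i ∈ S i) ∧ x = ∑ i, z i}

/-- Minkowski sum of a finite family of subsets of ℤ^n. -/
def minkSumZ {n m : ℕ} (S : Fin m → Set (Fin n → ℤ)) : Set (Fin n → ℤ) :=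
  {x | ∃ z : Fin m → (Fin n → ℤ), (∀ i, z i ∈ S i) ∧ x = ∑ i, z i}

/-- Integral neighborhood N(x) of a real vector x. -/
def intNbhd {n : ℕ} (x : Fin n → ℝ) : Set (Fin n → ℤ) :=
  {z | ∀ i, |x i - (z i : ℝ)| < 1}

/-- Integral convexity of a set S ⊆ ℤ^n. -/
def IntegrallyConvex {n : ℕ} (S : Set (Fin n → ℤ)) : Prop :=
  S.Nonempty ∧ ∀ x ∈ convexHull ℝ (coeZR '' S),
    x ∈ convexHull ℝ (coeZR '' (S ∩ intNbhd x))

/-- Minkowski sum of the subfamily indexed by I. -/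
def minkSumOn {n m : ℕ} (I : Finset (Fin m)) (S : Fin m → Set (Fin n → ℝ)) :
    Set (Fin n → ℝ) :=
  {x | ∃ z : Fin m → (Fin n → ℝ), (∀ i ∈ I, z i ∈ S i) ∧ x = ∑ i ∈ I, z i}

lemma minkSum_eq_sum {n m : ℕ} (S : Fin m → Set (Fin n → ℝ)) :
    minkSum S = ∑ i, S i := by
  ext x
  rw [Set.mem_fintype_sum]
  constructor
  · rintro ⟨z, hz, hx⟩; exact ⟨z, hz, hx.symm⟩
  · rintro ⟨g, hg, hx⟩; exact ⟨g, hg, hx.symm⟩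

lemma minkSumOn_eq_sum {n m : ℕ} (I : Finset (Fin m)) (S : Fin m → Set (Fin n → ℝ)) :
    minkSumOn I S = ∑ i ∈ I, S i := by
  ext x
  rw [Set.mem_finset_sum]
  constructor
  · rintro ⟨z, hz, hx⟩; exact ⟨z, fun hi => hz _ hi, hx.symm⟩
  · rintro ⟨g, hg, hx⟩; exact ⟨g, fun i hi => hg hi, hx.symm⟩

open Finset in
/-- Terminal step: if the total support has at most `n + m` points, the Shapley–Folkman
conclusion holds. -/
lemma sf_terminal {n m : ℕ} (S : Fin m → Set (Fin n → ℝ)) (x : Fin n → ℝ)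
    (t : Fin m → Finset (Fin n → ℝ)) (w : Fin m → (Fin n → ℝ) → ℝ)
    (hsub : ∀ i, ↑(t i) ⊆ S i)
    (hpos : ∀ i, ∀ v ∈ t i, 0 < w i v)
    (hsum1 : ∀ i, ∑ v ∈ t i, w i v = 1)
    (hxx : x = ∑ i, ∑ v ∈ t i, w i v • v)
    (hcard : ∑ i, (t i).card ≤ n + m) :
    ∃ I : Finset (Fin m), I.card ≤ min n m ∧
      ∃ y ∈ convexHull ℝ (minkSumOn I S), ∃ z : Fin m → (Fin n → ℝ),
        (∀ j ∈ Iᶜ, z j ∈ S j) ∧ x = y + ∑ j ∈ Iᶜ, z j := by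
  classical
  have hne : ∀ i, (t i).Nonempty := by
    intro i
    rw [Finset.nonempty_iff_ne_empty]
    intro h
    have := hsum1 i
    rw [h, Finset.sum_empty] at this
    norm_num at this
  set I : Finset (Fin m) := univ.filter (fun i => 2 ≤ (t i).card) with hI
  have hcard1 : ∀ i, 1 ≤ (t i).card := fun i => Finset.card_pos.mpr (hne i)
  have hsplit := Finset.sum_filter_add_sum_filter_not univ
    (fun i => 2 ≤ (t i).card) (fun i => (t i).card)
  have hA : I.card * 2 ≤ ∑ i ∈ I, (t i).card := by
    have := Finset.card_nsmul_le_sum I (fun i => (t i).card) 2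
      (fun i hi => (Finset.mem_filter.mp hi).2)
    simpa [smul_eq_mul] using this
  have hB : (univ.filter (fun i => ¬ 2 ≤ (t i).card)).card * 1 ≤
      ∑ i ∈ univ.filter (fun i => ¬ 2 ≤ (t i).card), (t i).card := by
    have := Finset.card_nsmul_le_sum (univ.filter (fun i => ¬ 2 ≤ (t i).card))
      (fun i => (t i).card) 1 (fun i _ => hcard1 i)
    simpa [smul_eq_mul] using this
  have hCC := Finset.card_filter_add_card_filter_not
    (s := (univ : Finset (Fin m))) (p := fun i => 2 ≤ (t i).card)
  rw [← hI] at hsplit hCC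
  have hum : (univ : Finset (Fin m)).card = m := by simp
  have hIn : I.card ≤ n := by omega
  have hIm : I.card ≤ m := le_trans (Finset.card_le_univ I) (le_of_eq hum)
  set z : Fin m → (Fin n → ℝ) := fun j => (hne j).choose with hzdef
  have hzt : ∀ j, z j ∈ t j := fun j => (hne j).choose_spec
  have hsingle : ∀ j ∉ I, t j = {z j} := by
    intro j hj
    have hc1 : (t j).card = 1 := by
      rw [hI] at hj
      simp only [Finset.mem_filter, Finset.mem_univ, true_and, not_le] at hj
      have h1j := hcard1 j
      omega
    obtain ⟨a, ha⟩ := Finset.card_eq_one.mp hc1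
    have := hzt j
    rw [ha] at this ⊢
    rw [Finset.mem_singleton] at this
    rw [this]
  have hF : ∀ j ∉ I, ∑ v ∈ t j, w j v • v = z j := by
    intro j hj
    have hw1 : w j (z j) = 1 := by
      have := hsum1 j
      rw [hsingle j hj, Finset.sum_singleton] at this
      exact this
    rw [hsingle j hj, Finset.sum_singleton, hw1, one_smul]
  refine ⟨I, le_min hIn hIm, ∑ i ∈ I, ∑ v ∈ t i, w i v • v, ?_, z, ?_, ?_⟩
  · rw [minkSumOn_eq_sum, convexHull_sum]
    apply Set.finset_sum_mem_finset_sum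
    intro i _
    have : (t i).centerMass (w i) id ∈ convexHull ℝ (S i) :=
      Finset.centerMass_mem_convexHull _ (fun v hv => (hpos i v hv).le)
        (by rw [hsum1 i]; norm_num) (fun v hv => hsub i hv)
    rwa [Finset.centerMass_eq_of_sum_1 _ id (hsum1 i)] at this
  · intro j hj
    exact hsub j (hzt j)
  · rw [hxx, ← Finset.sum_add_sum_compl I (fun i => ∑ v ∈ t i, w i v • v)]
    congr 1
    refine Finset.sum_congr rfl (fun j hj => ?_)
    exact hF j (Finset.mem_compl.mp hj)

open Finset in
/-- Main induction: any convex-combination representation can be reduced to one with small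
total support, yielding the Shapley–Folkman conclusion. -/
lemma sf_key {n m : ℕ} (S : Fin m → Set (Fin n → ℝ)) (x : Fin n → ℝ) :
    ∀ (N : ℕ) (t : Fin m → Finset (Fin n → ℝ)) (w : Fin m → (Fin n → ℝ) → ℝ),
      (∑ i, (t i).card ≤ N) →
      (∀ i, ↑(t i) ⊆ S i) →
      (∀ i, ∀ v ∈ t i, 0 < w i v) →
      (∀ i, ∑ v ∈ t i, w i v = 1) →
      (x = ∑ i, ∑ v ∈ t i, w i v • v) →
      ∃ I : Finset (Fin m), I.card ≤ min n m ∧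
        ∃ y ∈ convexHull ℝ (minkSumOn I S), ∃ z : Fin m → (Fin n → ℝ),
          (∀ j ∈ Iᶜ, z j ∈ S j) ∧ x = y + ∑ j ∈ Iᶜ, z j := by
  intro N
  induction N with
  | zero =>
    intro t w hc hsub hpos hsum1 hxx
    exact sf_terminal S x t w hsub hpos hsum1 hxx (le_trans hc (Nat.zero_le _))
  | succ N ih =>
    intro t w hc hsub hpos hsum1 hxx
    by_cases hnm : ∑ i, (t i).card ≤ n + m
    · exact sf_terminal S x t w hsub hpos hsum1 hxx hnm
    · push_neg at hnm
      classical
      set T : Finset ((_ : Fin m) × (Fin n → ℝ)) := univ.sigma t with hT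
      have hmemT : ∀ (i : Fin m) (u : Fin n → ℝ),
          (⟨i, u⟩ : (_ : Fin m) × (Fin n → ℝ)) ∈ T ↔ u ∈ t i := by
        intro i u; simp [hT, Finset.mem_sigma]
      have hTcard : T.card = ∑ i, (t i).card := Finset.card_sigma _ _
      set f : ((_ : Fin m) × (Fin n → ℝ)) → (Fin n → ℝ) × (Fin m → ℝ) :=
        fun j => (j.2, Pi.single j.1 (1 : ℝ)) with hf
      have hnotli : ¬ LinearIndependent ℝ (fun j : {j // j ∈ T} => f j.1) := by
        intro hli
        have h1 := hli.fintype_card_le_finrank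
        have h2 : Fintype.card {j // j ∈ T} = T.card := Fintype.card_coe T
        have h3 : Module.finrank ℝ ((Fin n → ℝ) × (Fin m → ℝ)) = n + m := by
          rw [Module.finrank_prod, Module.finrank_pi, Module.finrank_pi]
          simp
        omega
      obtain ⟨g, hg0, j₀', hgj₀⟩ := Fintype.not_linearIndependent_iff.mp hnotli
      set G : Fin m → (Fin n → ℝ) → ℝ := fun i u =>
        if h : (⟨i, u⟩ : (_ : Fin m) × (Fin n → ℝ)) ∈ T then g ⟨⟨i, u⟩, h⟩ else 0 with hG
      have hGval : ∀ (j : ((_ : Fin m) × (Fin n → ℝ))) (h : j ∈ T), G j.1 j.2 = g ⟨j, h⟩ := by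
        rintro ⟨i, u⟩ h
        simp only [hG]
        rw [dif_pos h]
      have h0 : ∑ j ∈ T, G j.1 j.2 • f j = 0 := by
        rw [← Finset.sum_coe_sort T (fun j => G j.1 j.2 • f j), ← hg0]
        exact Finset.sum_congr rfl (fun j _ => by rw [hGval j.1 j.2])
      have h1 : ∑ i : Fin m, ∑ u ∈ t i, G i u • f ⟨i, u⟩ = 0 := by
        rw [← Finset.sum_sigma univ t (fun j => G j.1 j.2 • f j)]
        exact h0
      have hrel1 : ∑ i : Fin m, ∑ u ∈ t i, G i u • u = 0 := by
        have := congrArg Prod.fst h1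
        simpa [hf, Prod.fst_sum] using this
      have hrel2 : ∀ k, ∑ u ∈ t k, G k u = 0 := by
        intro k
        have h2 := congrArg Prod.snd h1
        simp only [hf, Prod.snd_sum, Prod.smul_snd, Prod.snd_zero] at h2
        have h3 := congrArg (fun φ : Fin m → ℝ => φ k) h2
        simp only [Finset.sum_apply, Pi.smul_apply, Pi.single_apply, smul_eq_mul,
          mul_ite, mul_one, mul_zero, Pi.zero_apply] at h3
        have h4 : ∀ i : Fin m, (∑ u ∈ t i, if k = i then G i u else 0)
            = (if k = i then ∑ u ∈ t i, G i u else 0) := by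
          intro i; split_ifs <;> simp
        rw [Finset.sum_congr rfl (fun i _ => h4 i), Finset.sum_ite_eq univ k] at h3
        simpa using h3
      -- find an index with positive coefficient
      have hexne : ∃ jj ∈ t j₀'.1.1, G j₀'.1.1 jj ≠ 0 := by
        refine ⟨j₀'.1.2, (Finset.mem_sigma.mp j₀'.2).2, ?_⟩
        rw [hGval j₀'.1 j₀'.2]
        exact hgj₀
      obtain ⟨u₁, hu₁, hu₁pos⟩ := Finset.exists_pos_of_sum_zero_of_exists_nonzero
        (G j₀'.1.1) (hrel2 j₀'.1.1) hexne
      set P : Finset ((_ : Fin m) × (Fin n → ℝ)) := T.filter (fun j => 0 < G j.1 j.2) with hP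
      have hPne : P.Nonempty :=
        ⟨⟨j₀'.1.1, u₁⟩, Finset.mem_filter.mpr ⟨(hmemT _ _).mpr hu₁, hu₁pos⟩⟩
      obtain ⟨j₀, hj₀P, hmin⟩ := Finset.exists_min_image P (fun j => w j.1 j.2 / G j.1 j.2) hPne
      have hj₀T : j₀ ∈ T := (Finset.mem_filter.mp hj₀P).1
      have hj₀t : j₀.2 ∈ t j₀.1 := (hmemT j₀.1 j₀.2).mp hj₀T
      have hGj₀ : 0 < G j₀.1 j₀.2 := (Finset.mem_filter.mp hj₀P).2
      set r : ℝ := w j₀.1 j₀.2 / G j₀.1 j₀.2 with hr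
      have hr0 : 0 ≤ r := div_nonneg (hpos _ _ hj₀t).le hGj₀.le
      set w' : Fin m → (Fin n → ℝ) → ℝ := fun i u => w i u - r * G i u with hw'
      have hw'0 : ∀ i, ∀ u ∈ t i, 0 ≤ w' i u := by
        intro i u hu
        by_cases hGu : 0 < G i u
        · have hmem : (⟨i, u⟩ : (_ : Fin m) × (Fin n → ℝ)) ∈ P :=
            Finset.mem_filter.mpr ⟨(hmemT i u).mpr hu, hGu⟩
          have hmin' := hmin _ hmem
          have h5 : r * G i u ≤ w i u := (le_div_iff₀ hGu).mp hmin'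
          simp only [hw']
          linarith
        · push_neg at hGu
          have h6 : r * G i u ≤ 0 := mul_nonpos_of_nonneg_of_nonpos hr0 hGu
          have h7 := hpos i u hu
          simp only [hw']
          linarith
      set t' : Fin m → Finset (Fin n → ℝ) := fun i => (t i).filter (fun u => 0 < w' i u) with ht'
      have ht'sub : ∀ i, t' i ⊆ t i := fun i => Finset.filter_subset _ _
      have hzero : ∀ i, ∀ u ∈ t i, u ∉ t' i → w' i u = 0 := by
        intro i u hu hnu
        have h6 : ¬ 0 < w' i u := fun h7 => hnu (Finset.mem_filter.mpr ⟨hu, h7⟩)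
        have := hw'0 i u hu
        linarith
      have hsum1' : ∀ i, ∑ u ∈ t' i, w' i u = 1 := by
        intro i
        rw [Finset.sum_subset (ht'sub i) (fun u hu hnu => hzero i u hu hnu)]
        simp only [hw']
        rw [Finset.sum_sub_distrib, hsum1 i, ← Finset.mul_sum, hrel2 i, mul_zero, sub_zero]
      have hxx' : x = ∑ i, ∑ u ∈ t' i, w' i u • u := by
        have h8 : ∀ i, ∑ u ∈ t' i, w' i u • u = ∑ u ∈ t i, w' i u • u := fun i =>
          Finset.sum_subset (ht'sub i) (fun u hu hnu => by rw [hzero i u hu hnu, zero_smul])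
        have h9 : ∑ i : Fin m, ∑ u ∈ t i, (r * G i u) • u = 0 := by
          have h10 : ∑ i : Fin m, ∑ u ∈ t i, (r * G i u) • u
              = r • ∑ i : Fin m, ∑ u ∈ t i, G i u • u := by
            rw [Finset.smul_sum]
            refine Finset.sum_congr rfl fun i _ => ?_
            rw [Finset.smul_sum]
            exact Finset.sum_congr rfl fun u _ => by rw [mul_smul]
          rw [h10, hrel1, smul_zero]
        calc x = ∑ i, ∑ u ∈ t i, w i u • u := hxx
          _ = ∑ i, ∑ u ∈ t i, (w' i u • u + (r * G i u) • u) := by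
                refine Finset.sum_congr rfl fun i _ => Finset.sum_congr rfl fun u _ => ?_
                rw [← add_smul]
                simp [hw']
          _ = (∑ i, ∑ u ∈ t i, w' i u • u) + ∑ i, ∑ u ∈ t i, (r * G i u) • u := by
                rw [← Finset.sum_add_distrib]
                exact Finset.sum_congr rfl fun i _ => Finset.sum_add_distrib
          _ = ∑ i, ∑ u ∈ t' i, w' i u • u := by
                rw [h9, add_zero]
                exact (Finset.sum_congr rfl fun i _ => (h8 i)).symm
      have hj₀not : j₀.2 ∉ t' j₀.1 := by
        intro hmem
        have hlt0 := (Finset.mem_filter.mp hmem).2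
        have hzero' : w' j₀.1 j₀.2 = 0 := by
          simp only [hw', hr]
          rw [div_mul_cancel₀ _ hGj₀.ne', sub_self]
        rw [hzero'] at hlt0
        exact lt_irrefl 0 hlt0
      have hlt : (t' j₀.1).card < (t j₀.1).card :=
        Finset.card_lt_card ⟨ht'sub j₀.1, fun hsub' => hj₀not (hsub' hj₀t)⟩
      have hcard' : ∑ i, (t' i).card ≤ N := by
        have := Finset.sum_lt_sum (fun i (_ : i ∈ univ) => Finset.card_le_card (ht'sub i))
          ⟨j₀.1, Finset.mem_univ _, hlt⟩
        omega
      exact ih t' w' hcard' (fun i u hu => hsub i (ht'sub i hu))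
        (fun i u hu => (Finset.mem_filter.mp hu).2) hsum1' hxx'

/-- Shapley–Folkman lemma. -/
theorem stmt4 {n m : ℕ} (S : Fin m → Set (Fin n → ℝ)) (hne : ∀ i, (S i).Nonempty)
    (x : Fin n → ℝ) (hx : x ∈ convexHull ℝ (minkSum S)) :
    ∃ I : Finset (Fin m), I.card ≤ min n m ∧
      ∃ y ∈ convexHull ℝ (minkSumOn I S), ∃ z : Fin m → (Fin n → ℝ),
        (∀ j ∈ Iᶜ, z j ∈ S j) ∧ x = y + ∑ j ∈ Iᶜ, z j := by
  classical
  rw [minkSum_eq_sum, convexHull_sum] at hx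
  rw [Set.mem_fintype_sum] at hx
  obtain ⟨y, hy, hxy⟩ := hx
  have h1 : ∀ i, ∃ (t : Finset (Fin n → ℝ)) (w : (Fin n → ℝ) → ℝ),
      ↑t ⊆ S i ∧ (∀ v ∈ t, 0 < w v) ∧ (∑ v ∈ t, w v = 1) ∧ y i = ∑ v ∈ t, w v • v := by
    intro i
    have hyi := hy i
    rw [convexHull_eq_union] at hyi
    simp only [Set.mem_iUnion] at hyi
    obtain ⟨t, hts, -, hyt⟩ := hyi
    rw [Finset.convexHull_eq] at hyt
    obtain ⟨w, hw0, hw1, hwc⟩ := hyt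
    rw [Finset.centerMass_eq_of_sum_1 _ id hw1] at hwc
    refine ⟨t.filter (fun v => 0 < w v), w, ?_, ?_, ?_, ?_⟩
    · exact fun v hv => hts (Finset.mem_coe.mpr (Finset.filter_subset _ _ hv))
    · exact fun v hv => (Finset.mem_filter.mp hv).2
    · rw [Finset.sum_filter_of_ne (fun v hv h => lt_of_le_of_ne (hw0 v hv) (Ne.symm h))]
      exact hw1
    · rw [← hwc]
      have := Finset.sum_filter_of_ne
        (f := fun v => w v • v) (p := fun v => 0 < w v) (s := t) ?_
      · rw [this]
        simp [id]
      · intro v hv h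
        refine (hw0 v hv).lt_of_ne fun h' => h ?_
        show w v • v = 0
        rw [← h', zero_smul]
  choose t w hsub hpos hsum1 hrep using h1
  have hxx : x = ∑ i, ∑ v ∈ t i, w i v • v := by
    rw [← hxy]
    exact Finset.sum_congr rfl fun i _ => hrep i
  exact sf_key S x (∑ i, (t i).card) t w le_rfl hsub hpos hsum1 hxx
end
end

section
/- Let S_1, …, S_m be integrally convex subsets of ℤ^n with n ≥ 2, and W = S_1 + ⋯ + S_m. For any x in the convex hull of W, there exists z ∈ W with ‖x − z‖_∞ ≤ (1 − 1/n)·min(n,m). -/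
open scoped BigOperators Pointwise

noncomputable section

open Finset in
lemma round_lemma {n : ℕ} (hn : 2 ≤ n) (T : Set (Fin n → ℤ)) (x : Fin n → ℝ)
    (hT : T ⊆ intNbhd x) (hx : x ∈ convexHull ℝ (coeZR '' T)) :
    ∃ v ∈ T, ∀ c, |x c - (v c : ℝ)| ≤ 1 - 1 / n := by
  by_contra hcon
  push_neg at hcon
  obtain ⟨ι, _inst, z, w, hrange, -, hw0, hw1, hsum⟩ :=
    eq_pos_convex_span_of_mem_convexHull hx
  have hnpos : (0:ℝ) < n := by positivity
  have hz : ∀ j, ∃ v ∈ T, coeZR v = z j := by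
    intro j
    exact hrange (Set.mem_range_self j)
  choose v hvT hvz using hz
  -- coordinates of each v j are floor or floor+1
  have hfl : ∀ j c, v j c = ⌊x c⌋ ∨ v j c = ⌊x c⌋ + 1 := by
    intro j c
    have h1 : |x c - ((v j c : ℤ) : ℝ)| < 1 := hT (hvT j) c
    rw [abs_lt] at h1
    have hlow : ⌊x c⌋ ≤ v j c := by
      have : x c < ((v j c + 1 : ℤ) : ℝ) := by push_cast; linarith [h1.2]
      have := Int.floor_lt.2 this
      omega
    have hhigh : v j c ≤ ⌊x c⌋ + 1 := by
      have hfx : x c < ((⌊x c⌋ + 1 : ℤ) : ℝ) := by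
        push_cast; exact Int.lt_floor_add_one _
      have : ((v j c : ℤ) : ℝ) < ((⌊x c⌋ + 2 : ℤ) : ℝ) := by push_cast; push_cast at hfx; linarith [h1.1]
      have : (v j c : ℤ) < ⌊x c⌋ + 2 := by exact_mod_cast this
      omega
    omega
  set A : Finset (Fin n) := univ.filter (fun c => x c - ⌊x c⌋ < 1 / n) with hA
  set B : Finset (Fin n) := univ.filter (fun c => 1 - 1 / (n:ℝ) < x c - ⌊x c⌋) with hB
  have hdisj : Disjoint A B := by
    rw [Finset.disjoint_left]
    intro c hcA hcB
    rw [hA, Finset.mem_filter] at hcA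
    rw [hB, Finset.mem_filter] at hcB
    have h2 : (1:ℝ)/n ≤ 1/2 := by
      rw [div_le_div_iff₀ hnpos (by norm_num)]
      have : (2:ℝ) ≤ n := by exact_mod_cast hn
      linarith
    linarith [hcA.2, hcB.2]
  -- key: each v j has a coordinate witnessing badness
  have key : ∀ j, (∃ c ∈ A, v j c = ⌊x c⌋ + 1) ∨ (∃ c ∈ B, v j c = ⌊x c⌋) := by
    intro j
    obtain ⟨c, hc⟩ := hcon (v j) (hvT j)
    rcases hfl j c with h | h
    · right
      refine ⟨c, ?_, h⟩
      rw [hB, Finset.mem_filter]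
      refine ⟨Finset.mem_univ _, ?_⟩
      have : |x c - (v j c : ℝ)| = x c - ⌊x c⌋ := by
        rw [h]; rw [abs_of_nonneg] <;> push_cast <;> linarith [Int.floor_le (x c)]
      linarith [this ▸ hc]
    · left
      refine ⟨c, ?_, h⟩
      rw [hA, Finset.mem_filter]
      refine ⟨Finset.mem_univ _, ?_⟩
      have : |x c - (v j c : ℝ)| = (⌊x c⌋:ℝ) + 1 - x c := by
        rw [h]; rw [abs_of_nonpos] <;> push_cast <;> linarith [Int.lt_floor_add_one (x c)]
      have h2 := this ▸ hc
      linarith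
  set G : ι → ℝ := fun j =>
    (∑ c ∈ A, ((v j c : ℝ) - ⌊x c⌋)) + ∑ c ∈ B, ((⌊x c⌋ : ℝ) + 1 - v j c) with hG
  have hterm01A : ∀ j, ∀ c, (0:ℝ) ≤ (v j c : ℝ) - ⌊x c⌋ := by
    intro j c; rcases hfl j c with h | h <;> rw [h] <;> push_cast <;> linarith
  have hterm01B : ∀ j, ∀ c, (0:ℝ) ≤ (⌊x c⌋ : ℝ) + 1 - v j c := by
    intro j c; rcases hfl j c with h | h <;> rw [h] <;> push_cast <;> linarith
  have hG1 : ∀ j, 1 ≤ G j := by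
    intro j
    rcases key j with ⟨c, hcA, hc⟩ | ⟨c, hcB, hc⟩
    · have h1 : (1:ℝ) ≤ ∑ c ∈ A, ((v j c : ℝ) - ⌊x c⌋) := by
        have : ((v j c : ℝ) - ⌊x c⌋) = 1 := by rw [hc]; push_cast; ring
        calc (1:ℝ) = (v j c : ℝ) - ⌊x c⌋ := this.symm
        _ ≤ _ := Finset.single_le_sum (fun c _ => hterm01A j c) hcA
      have h2 : (0:ℝ) ≤ ∑ c ∈ B, ((⌊x c⌋ : ℝ) + 1 - v j c) :=
        Finset.sum_nonneg fun c _ => hterm01B j c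
      rw [hG]; dsimp only; linarith
    · have h1 : (1:ℝ) ≤ ∑ c ∈ B, ((⌊x c⌋ : ℝ) + 1 - v j c) := by
        have : ((⌊x c⌋ : ℝ) + 1 - v j c) = 1 := by rw [hc]; push_cast; ring
        calc (1:ℝ) = (⌊x c⌋ : ℝ) + 1 - v j c := this.symm
        _ ≤ _ := Finset.single_le_sum (fun c _ => hterm01B j c) hcB
      have h2 : (0:ℝ) ≤ ∑ c ∈ A, ((v j c : ℝ) - ⌊x c⌋) :=
        Finset.sum_nonneg fun c _ => hterm01A j c
      rw [hG]; dsimp only; linarith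
  -- Σ_j w j * (v j c) = x c
  have hcoord : ∀ c, ∑ j, w j * (v j c : ℝ) = x c := by
    intro c
    have := congrFun hsum c
    rw [Finset.sum_apply] at this
    calc ∑ j, w j * (v j c : ℝ) = ∑ j, (w j • z j) c := by
          apply Finset.sum_congr rfl
          intro j _
          rw [← hvz j]
          simp [coeZR]
    _ = x c := this
  have hmain : ∑ j, w j * G j
      = (∑ c ∈ A, (x c - ⌊x c⌋)) + ∑ c ∈ B, ((⌊x c⌋:ℝ) + 1 - x c) := by
    rw [hG]
    simp only [mul_add, Finset.mul_sum, Finset.sum_add_distrib]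
    congr 1
    · rw [Finset.sum_comm]
      apply Finset.sum_congr rfl
      intro c _
      have : ∑ j, w j * ((v j c : ℝ) - ⌊x c⌋) = (∑ j, w j * (v j c:ℝ)) - (∑ j, w j) * ⌊x c⌋ := by
        rw [Finset.sum_mul, ← Finset.sum_sub_distrib]
        apply Finset.sum_congr rfl
        intro j _; ring
      rw [this, hcoord c, hw1]; ring
    · rw [Finset.sum_comm]
      apply Finset.sum_congr rfl
      intro c _
      have : ∑ j, w j * ((⌊x c⌋:ℝ) + 1 - v j c) = (∑ j, w j) * ((⌊x c⌋:ℝ)+1) - ∑ j, w j * (v j c:ℝ) := by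
        rw [Finset.sum_mul, ← Finset.sum_sub_distrib]
        apply Finset.sum_congr rfl
        intro j _; ring
      rw [this, hcoord c, hw1]; ring
  have hLHS : (1:ℝ) ≤ ∑ j, w j * G j := by
    calc (1:ℝ) = ∑ j, w j := hw1.symm
    _ = ∑ j, w j * 1 := by simp
    _ ≤ ∑ j, w j * G j := by
        apply Finset.sum_le_sum
        intro j _
        exact mul_le_mul_of_nonneg_left (hG1 j) (hw0 j).le
  -- nonemptiness of ι
  have hune : (Finset.univ : Finset ι).Nonempty := by
    rcases (Finset.univ : Finset ι).eq_empty_or_nonempty with h | h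
    · exfalso; rw [h] at hw1; simp at hw1
    · exact h
  obtain ⟨j0, -⟩ := hune
  -- A ∪ B nonempty
  have hABne : A.Nonempty ∨ B.Nonempty := by
    rcases key j0 with ⟨c, hc, -⟩ | ⟨c, hc, -⟩
    · exact Or.inl ⟨c, hc⟩
    · exact Or.inr ⟨c, hc⟩
  have hcardAB : (A.card : ℝ) + B.card ≤ n := by
    have h1 : A.card + B.card = (A ∪ B).card := (Finset.card_union_of_disjoint hdisj).symm
    have h2 : (A ∪ B).card ≤ n := by
      calc (A ∪ B).card ≤ Fintype.card (Fin n) := Finset.card_le_univ _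
      _ = n := Fintype.card_fin n
    have : A.card + B.card ≤ n := by omega
    exact_mod_cast this
  have hAle : ∀ c ∈ A, x c - ⌊x c⌋ < 1/n := by
    intro c hc; rw [hA, Finset.mem_filter] at hc; exact hc.2
  have hBle : ∀ c ∈ B, (⌊x c⌋:ℝ) + 1 - x c < 1/n := by
    intro c hc; rw [hB, Finset.mem_filter] at hc; linarith [hc.2]
  have hRHS : (∑ c ∈ A, (x c - ⌊x c⌋)) + ∑ c ∈ B, ((⌊x c⌋:ℝ) + 1 - x c) < 1 := by
    have hAsum : ∑ c ∈ A, (x c - ⌊x c⌋) ≤ A.card * (1/n) := by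
      calc ∑ c ∈ A, (x c - ⌊x c⌋) ≤ ∑ c ∈ A, (1/(n:ℝ)) :=
            Finset.sum_le_sum (fun c hc => (hAle c hc).le)
      _ = A.card * (1/n) := by rw [Finset.sum_const, nsmul_eq_mul]
    have hBsum : ∑ c ∈ B, ((⌊x c⌋:ℝ) + 1 - x c) ≤ B.card * (1/n) := by
      calc ∑ c ∈ B, ((⌊x c⌋:ℝ) + 1 - x c) ≤ ∑ c ∈ B, (1/(n:ℝ)) :=
            Finset.sum_le_sum (fun c hc => (hBle c hc).le)
      _ = B.card * (1/n) := by rw [Finset.sum_const, nsmul_eq_mul]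
    have hfinal : ((A.card:ℝ) + B.card) * (1/n) ≤ 1 := by
      rw [mul_one_div, div_le_one hnpos]; exact hcardAB
    rcases hABne with hAne | hBne
    · have hAsum' : ∑ c ∈ A, (x c - ⌊x c⌋) < A.card * (1/n) := by
        calc ∑ c ∈ A, (x c - ⌊x c⌋) < ∑ c ∈ A, (1/(n:ℝ)) :=
              Finset.sum_lt_sum_of_nonempty hAne hAle
        _ = A.card * (1/n) := by rw [Finset.sum_const, nsmul_eq_mul]
      nlinarith
    · have hBsum' : ∑ c ∈ B, ((⌊x c⌋:ℝ) + 1 - x c) < B.card * (1/n) := by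
        calc ∑ c ∈ B, ((⌊x c⌋:ℝ) + 1 - x c) < ∑ c ∈ B, (1/(n:ℝ)) :=
              Finset.sum_lt_sum_of_nonempty hBne hBle
        _ = B.card * (1/n) := by rw [Finset.sum_const, nsmul_eq_mul]
      nlinarith
  rw [hmain] at hLHS
  linarith


/-- auxiliary affine embedding a ↦ (a, e_i) -/
def embAff {n m : ℕ} (i : Fin m) : (Fin n → ℝ) →ᵃ[ℝ] ((Fin n → ℝ) × (Fin m → ℝ)) where
  toFun a := (a, Pi.single i 1)
  linear := LinearMap.prod LinearMap.id 0
  map_vadd' p v := by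
    ext j <;> simp [Prod.ext_iff]

open Finset in
lemma sf_lemma {n m : ℕ} (hm : 1 ≤ m) (A : Fin m → Set (Fin n → ℝ))
    (x : Fin m → Fin n → ℝ) (hx : ∀ i, x i ∈ convexHull ℝ (A i)) :
    ∃ (y : Fin m → Fin n → ℝ) (bad : Finset (Fin m)),
      (∀ i, y i ∈ convexHull ℝ (A i)) ∧ (∀ i ∉ bad, y i ∈ A i) ∧
      bad.card ≤ n ∧ ∑ i, y i = ∑ i, x i := by
  classical
  have hm0 : (m:ℝ) ≠ 0 := by positivity
  set P : Set ((Fin n → ℝ) × (Fin m → ℝ)) := ⋃ i, (embAff (n := n) i) '' A i with hP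
  -- the scaled point is in the convex hull of P
  have h1 : ∀ i, ((x i, Pi.single i 1) : (Fin n → ℝ) × (Fin m → ℝ)) ∈ convexHull ℝ P := by
    intro i
    have hx' : (embAff (n := n) i) (x i) ∈ (embAff (n := n) i) '' (convexHull ℝ (A i)) :=
      Set.mem_image_of_mem _ (hx i)
    rw [AffineMap.image_convexHull] at hx'
    exact convexHull_mono (Set.subset_iUnion (fun i => (embAff (n := n) i) '' A i) i) hx'
  have hq : (((m:ℝ)⁻¹ • ∑ i, x i, fun _ => (m:ℝ)⁻¹) : (Fin n → ℝ) × (Fin m → ℝ))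
      ∈ convexHull ℝ P := by
    have heq : (((m:ℝ)⁻¹ • ∑ i, x i, fun _ => (m:ℝ)⁻¹) : (Fin n → ℝ) × (Fin m → ℝ))
        = ∑ i, (m:ℝ)⁻¹ • ((x i, Pi.single i 1) : (Fin n → ℝ) × (Fin m → ℝ)) := by
      refine Prod.ext ?_ ?_
      · rw [Prod.fst_sum]
        simp [Finset.smul_sum]
      · rw [Prod.snd_sum]
        funext j
        rw [Finset.sum_apply]
        simp only [Prod.smul_snd, Pi.smul_apply, smul_eq_mul]
        rw [← Finset.mul_sum]
        rw [Fintype.sum_pi_single j (fun _ => (1:ℝ))]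
        simp
    rw [heq]
    apply (convex_convexHull ℝ P).sum_mem
    · intro i _; positivity
    · rw [Finset.sum_const, Finset.card_univ, Fintype.card_fin, nsmul_eq_mul,
        mul_inv_cancel₀ hm0]
    · intro i _; exact h1 i
  obtain ⟨ι, _inst, z, w, hrange, haff, hw0, hw1, hsum⟩ :=
    eq_pos_convex_span_of_mem_convexHull hq
  -- extract index and point for each j
  have hz : ∀ j, ∃ i, ∃ a ∈ A i, z j = (a, Pi.single i 1) := by
    intro j
    have := hrange (Set.mem_range_self j)
    rw [hP] at this
    simp only [Set.mem_iUnion, Set.mem_image] at this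
    obtain ⟨i, aa, ha, he⟩ := this
    exact ⟨i, aa, ha, he.symm⟩
  choose c a ha hza using hz
  -- cardinality bound via affine independence
  have hcard : Fintype.card ι ≤ n + m := by
    have h1 := haff.card_le_finrank_succ
    set L : (Fin m → ℝ) →ₗ[ℝ] ℝ := ∑ i, LinearMap.proj i with hL
    have hLapp : ∀ v, L v = ∑ i, v i := by
      intro v; rw [hL]; simp [LinearMap.sum_apply]
    have hLsingle : ∀ i : Fin m, L (Pi.single i 1) = 1 := by
      intro i
      rw [hLapp]
      rw [Finset.sum_pi_single']
      simp
    have hLsurj : Function.Surjective L := by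
      intro r
      refine ⟨r • (Pi.single (⟨0, hm⟩ : Fin m) (1:ℝ) : Fin m → ℝ), ?_⟩
      rw [map_smul, hLsingle]
      simp
    have hker : Module.finrank ℝ (LinearMap.ker L) = m - 1 := by
      have h2 := LinearMap.finrank_range_add_finrank_ker L
      rw [LinearMap.range_eq_top.2 hLsurj] at h2
      rw [finrank_top, Module.finrank_self] at h2
      rw [Module.finrank_pi, Fintype.card_fin] at h2
      omega
    set Φ : ((Fin n → ℝ) × (LinearMap.ker L)) →ₗ[ℝ] ((Fin n → ℝ) × (Fin m → ℝ)) :=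
      LinearMap.prodMap LinearMap.id (LinearMap.ker L).subtype with hΦ
    have hspan : vectorSpan ℝ (Set.range z) ≤ LinearMap.range Φ := by
      rw [vectorSpan_def, Submodule.span_le]
      rintro u hu
      obtain ⟨p, hp, q, hq', rfl⟩ := hu
      obtain ⟨j, rfl⟩ := hp
      obtain ⟨j', rfl⟩ := hq'
      have hkermem : (z j -ᵥ z j').2 ∈ LinearMap.ker L := by
        rw [LinearMap.mem_ker]
        have : (z j -ᵥ z j') = z j - z j' := rfl
        rw [this]
        have h2 : (z j - z j').2 = Pi.single (c j) 1 - Pi.single (c j') 1 := by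
          rw [hza j, hza j']
          rfl
        rw [h2, map_sub, hLsingle, hLsingle, sub_self]
      refine ⟨((z j -ᵥ z j').1, ⟨(z j -ᵥ z j').2, hkermem⟩), ?_⟩
      rw [hΦ]
      rfl
    have h2 : Module.finrank ℝ (vectorSpan ℝ (Set.range z))
        ≤ Module.finrank ℝ (LinearMap.range Φ) := Submodule.finrank_mono hspan
    have h3 : Module.finrank ℝ (LinearMap.range Φ)
        ≤ Module.finrank ℝ ((Fin n → ℝ) × (LinearMap.ker L)) := Φ.finrank_range_le
    have h4 : Module.finrank ℝ ((Fin n → ℝ) × (LinearMap.ker L)) = n + (m - 1) := by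
      rw [Module.finrank_prod, hker, Module.finrank_pi, Fintype.card_fin]
    omega
  -- fibers
  set fib : Fin m → Finset ι := fun i => univ.filter (fun j => c j = i) with hfib
  have hwfiber : ∀ i, ∑ j ∈ fib i, w j = (m:ℝ)⁻¹ := by
    intro i
    have hs := congrArg Prod.snd hsum
    rw [Prod.snd_sum] at hs
    have hs2 := congrFun hs i
    rw [Finset.sum_apply] at hs2
    have hs2' : ∑ j, (w j • z j).2 i = (m:ℝ)⁻¹ := hs2
    have hs3 : ∑ j, w j * ((z j).2 i) = (m:ℝ)⁻¹ := by
      rw [← hs2']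
      apply Finset.sum_congr rfl
      intro j _
      simp
    rw [hfib]
    rw [Finset.sum_filter]
    rw [← hs3]
    apply Finset.sum_congr rfl
    intro j _
    rw [hza j]
    by_cases h : c j = i
    · subst h; simp
    · have h' : i ≠ c j := fun hh => h hh.symm
      simp [Pi.single_apply, h, h']
  have hfne : ∀ i, (fib i).Nonempty := by
    intro i
    rcases (fib i).eq_empty_or_nonempty with h | h
    · exfalso
      have := hwfiber i
      rw [h, Finset.sum_empty] at this
      exact (inv_ne_zero hm0) this.symm
    · exact h
  set y : Fin m → Fin n → ℝ := fun i => (m:ℝ) • ∑ j ∈ fib i, w j • a j with hy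
  have hyrep : ∀ i, y i = ∑ j ∈ fib i, ((m:ℝ) * w j) • a j := by
    intro i
    rw [hy]
    dsimp only
    rw [Finset.smul_sum]
    apply Finset.sum_congr rfl
    intro j _
    rw [smul_smul]
  have hysum : ∀ i, ∑ j ∈ fib i, (m:ℝ) * w j = 1 := by
    intro i
    rw [← Finset.mul_sum, hwfiber, mul_inv_cancel₀ hm0]
  have hyA : ∀ i, ∀ j ∈ fib i, a j ∈ A i := by
    intro i j hj
    rw [hfib, Finset.mem_filter] at hj
    exact hj.2 ▸ ha j
  have hyhull : ∀ i, y i ∈ convexHull ℝ (A i) := by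
    intro i
    rw [hyrep]
    apply (convex_convexHull ℝ (A i)).sum_mem
    · intro j _
      have := (hw0 j).le
      positivity
    · exact hysum i
    · intro j hj
      exact subset_convexHull ℝ _ (hyA i j hj)
  -- total sum
  have hsumy : ∑ i, y i = ∑ i, x i := by
    have hfst := congrArg Prod.fst hsum
    rw [Prod.fst_sum] at hfst
    have hfst2 : ∑ j, w j • a j = (m:ℝ)⁻¹ • ∑ i, x i := by
      have hfst' : ∑ j, (w j • z j).1 = (m:ℝ)⁻¹ • ∑ i, x i := hfst
      rw [← hfst']
      apply Finset.sum_congr rfl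
      intro j _
      rw [hza j]
      simp
    calc ∑ i, y i = (m:ℝ) • ∑ i, ∑ j ∈ fib i, w j • a j := by
          rw [Finset.smul_sum]
    _ = (m:ℝ) • ∑ j, w j • a j := by
          congr 1
          exact Finset.sum_fiberwise _ _ _
    _ = (m:ℝ) • ((m:ℝ)⁻¹ • ∑ i, x i) := by rw [hfst2]
    _ = ∑ i, x i := by rw [smul_smul, mul_inv_cancel₀ hm0, one_smul]
  -- bad set
  set bad : Finset (Fin m) := univ.filter (fun i => 1 < (fib i).card) with hbad
  have hcount : ∑ i, (fib i).card = Fintype.card ι := by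
    rw [← Finset.card_univ]
    exact (Finset.card_eq_sum_card_fiberwise (fun j _ => Finset.mem_univ (c j))).symm
  have hbadcard : bad.card ≤ n := by
    have hlow : ∀ i, 1 + (if i ∈ bad then 1 else 0) ≤ (fib i).card := by
      intro i
      by_cases h : i ∈ bad
      · rw [if_pos h]
        rw [hbad, Finset.mem_filter] at h
        omega
      · rw [if_neg h]
        have := hfne i
        rw [← Finset.card_pos] at this
        omega
    have h5 : ∑ i, (1 + (if i ∈ bad then 1 else 0)) ≤ ∑ i, (fib i).card :=
      Finset.sum_le_sum (fun i _ => hlow i)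
    rw [Finset.sum_add_distrib, Finset.sum_const, Finset.card_univ, Fintype.card_fin] at h5
    rw [Finset.sum_ite_mem, Finset.univ_inter, Finset.sum_const] at h5
    simp only [smul_eq_mul, mul_one] at h5
    omega
  have hgood : ∀ i ∉ bad, y i ∈ A i := by
    intro i hi
    rw [hbad, Finset.mem_filter] at hi
    push_neg at hi
    have hc1 : (fib i).card = 1 := by
      have := hfne i
      rw [← Finset.card_pos] at this
      have h6 := hi (Finset.mem_univ i)
      omega
    obtain ⟨j0, hj0⟩ := Finset.card_eq_one.1 hc1
    have hwj0 : w j0 = (m:ℝ)⁻¹ := by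
      have := hwfiber i
      rw [hj0, Finset.sum_singleton] at this
      exact this
    have haj0 : a j0 ∈ A i := by
      apply hyA i
      rw [hj0]
      exact Finset.mem_singleton_self j0
    have : y i = a j0 := by
      rw [hyrep, hj0, Finset.sum_singleton, hwj0, mul_inv_cancel₀ hm0, one_smul]
    rw [this]
    exact haj0
  exact ⟨y, bad, hyhull, hgood, hbadcard, hsumy⟩


lemma coeZR_sum {n m : ℕ} (z : Fin m → Fin n → ℤ) :
    coeZR (∑ i, z i) = ∑ i, coeZR (z i) := by
  funext c
  rw [Finset.sum_apply]
  simp only [coeZR, Finset.sum_apply]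
  push_cast
  rfl

lemma decomp_lemma {n m : ℕ} (S : Fin m → Set (Fin n → ℤ)) (x : Fin n → ℝ)
    (hx : x ∈ convexHull ℝ (coeZR '' minkSumZ S)) :
    ∃ y : Fin m → Fin n → ℝ, (∀ i, y i ∈ convexHull ℝ (coeZR '' S i)) ∧ x = ∑ i, y i := by
  set D : Set (Fin n → ℝ) := {u | ∃ y : Fin m → Fin n → ℝ,
    (∀ i, y i ∈ convexHull ℝ (coeZR '' S i)) ∧ u = ∑ i, y i} with hD
  have hconv : Convex ℝ D := by
    rintro u ⟨yu, hyu, rfl⟩ v ⟨yv, hyv, rfl⟩ s t hs ht hst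
    refine ⟨fun i => s • yu i + t • yv i,
      fun i => (convex_convexHull ℝ _) (hyu i) (hyv i) hs ht hst, ?_⟩
    rw [Finset.sum_add_distrib, ← Finset.smul_sum, ← Finset.smul_sum]
  have hsub : coeZR '' minkSumZ S ⊆ D := by
    rintro u ⟨zz, ⟨zv, hzv, rfl⟩, rfl⟩
    exact ⟨fun i => coeZR (zv i),
      fun i => subset_convexHull ℝ _ (Set.mem_image_of_mem _ (hzv i)), coeZR_sum zv⟩
  exact convexHull_min hsub hconv hx

/-- Shapley–Folkman-type theorem for integrally convex sets (ℓ∞ bound). -/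
theorem stmt9 {n m : ℕ} (hn : 2 ≤ n) (hm : 1 ≤ m)
    (S : Fin m → Set (Fin n → ℤ)) (hS : ∀ i, IntegrallyConvex (S i))
    (x : Fin n → ℝ) (hx : x ∈ convexHull ℝ (coeZR '' minkSumZ S)) :
    ∃ z ∈ minkSumZ S, ‖x - coeZR z‖ ≤ (1 - 1 / n) * min n m := by
  have hnpos : (0:ℝ) < n := by positivity
  have hfac : (0:ℝ) ≤ 1 - 1/(n:ℝ) := by
    have h2 : (2:ℝ) ≤ n := by exact_mod_cast hn
    rw [sub_nonneg, div_le_one hnpos]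
    linarith
  obtain ⟨xv, hxv, rfl⟩ := decomp_lemma S x hx
  obtain ⟨y, bad, hyhull, hygood, hbadcard, hysum⟩ :=
    sf_lemma hm (fun i => coeZR '' S i) xv hxv
  have hzi : ∀ i, ∃ zi ∈ S i,
      ∀ c, |y i c - (zi c : ℝ)| ≤ (if i ∈ bad then 1 - 1/(n:ℝ) else 0) := by
    intro i
    by_cases hib : i ∈ bad
    · have hmem := (hS i).2 (y i) (hyhull i)
      obtain ⟨v, hvT, hvb⟩ := round_lemma hn (S i ∩ intNbhd (y i)) (y i)
        Set.inter_subset_right hmem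
      exact ⟨v, hvT.1, fun c => by rw [if_pos hib]; exact hvb c⟩
    · obtain ⟨v, hvS, hveq⟩ := hygood i hib
      refine ⟨v, hvS, fun c => ?_⟩
      rw [if_neg hib, ← hveq]
      simp [coeZR]
  choose zf hzfS hzfb using hzi
  refine ⟨∑ i, zf i, ⟨zf, hzfS, rfl⟩, ?_⟩
  have hdiff : (∑ i, xv i) - coeZR (∑ i, zf i) = ∑ i, (y i - coeZR (zf i)) := by
    rw [coeZR_sum, Finset.sum_sub_distrib, ← hysum]
  rw [hdiff]
  have hbound : ∀ i, ‖y i - coeZR (zf i)‖ ≤ (if i ∈ bad then 1 - 1/(n:ℝ) else 0) := by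
    intro i
    have hge : (0:ℝ) ≤ (if i ∈ bad then 1 - 1/(n:ℝ) else 0) := by
      split
      · exact hfac
      · exact le_rfl
    rw [pi_norm_le_iff_of_nonneg hge]
    intro c
    rw [Pi.sub_apply, Real.norm_eq_abs]
    exact hzfb i c
  calc ‖∑ i, (y i - coeZR (zf i))‖ ≤ ∑ i, ‖y i - coeZR (zf i)‖ := norm_sum_le _ _
  _ ≤ ∑ i, (if i ∈ bad then 1 - 1/(n:ℝ) else 0) := Finset.sum_le_sum (fun i _ => hbound i)
  _ = bad.card * (1 - 1/(n:ℝ)) := by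
      rw [Finset.sum_ite_mem, Finset.univ_inter, Finset.sum_const, nsmul_eq_mul]
  _ ≤ (1 - 1 / n) * min n m := by
      rw [mul_comm]
      apply mul_le_mul_of_nonneg_left _ hfac
      have hcm : bad.card ≤ m := by
        simpa using Finset.card_le_univ bad
      have hmin : bad.card ≤ min n m := le_min hbadcard hcm
      exact_mod_cast hmin
end
end

section
/- Let S_1, …, S_m be integrally convex subsets of ℤ^n with n ≥ 2, and W = S_1 + ⋯ + S_m. For any integral point x ∈ conv(W) ∩ ℤ^n, there exists z ∈ W with ‖x − z‖_∞ ≤ min(n,m) − 1. -/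
open scoped BigOperators Pointwise

noncomputable section

theorem sf_aux {n m : ℕ} (hm : 1 ≤ m) (A : Fin m → Set (Fin n → ℝ))
    (y : Fin m → (Fin n → ℝ)) (hy : ∀ i, y i ∈ convexHull ℝ (A i)) :
    ∃ (u : Fin m → (Fin n → ℝ)) (Bad : Finset (Fin m)),
      (∀ i, u i ∈ convexHull ℝ (A i)) ∧ (∀ i ∉ Bad, u i ∈ A i) ∧ Bad.card ≤ n ∧
      ∑ i, u i = ∑ i, y i := by
  classical
  have hm0 : (m : ℝ) ≠ 0 := by positivity
  set T : Set ((Fin m → ℝ) × (Fin n → ℝ)) := ⋃ i, {Pi.single i 1} ×ˢ A i with hT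
  set g : Fin m → (Fin m → ℝ) × (Fin n → ℝ) := fun i => (Pi.single i 1, y i) with hg
  have hgT : ∀ i, g i ∈ convexHull ℝ T := by
    intro i
    have h2 : ({Pi.single i 1} : Set (Fin m → ℝ)) ×ˢ convexHull ℝ (A i) =
        convexHull ℝ (({Pi.single i 1} : Set (Fin m → ℝ)) ×ˢ A i) := by
      rw [convexHull_prod, convexHull_singleton]
    have h1 : g i ∈ ({Pi.single i 1} : Set (Fin m → ℝ)) ×ˢ convexHull ℝ (A i) :=
      ⟨rfl, hy i⟩
    rw [h2] at h1
    exact convexHull_mono (Set.subset_iUnion _ i) h1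
  set q : (Fin m → ℝ) × (Fin n → ℝ) := ∑ i, ((m:ℝ)⁻¹) • g i with hqdef
  have hq : q ∈ convexHull ℝ T := by
    refine (convex_convexHull ℝ T).sum_mem (fun i _ => by positivity) ?_ (fun i _ => hgT i)
    simp [Finset.sum_const, Finset.card_univ, hm0]
  have hq1 : ∀ j, q.1 j = (m:ℝ)⁻¹ := by
    intro j
    rw [hqdef, Prod.fst_sum]
    simp only [Prod.smul_fst, hg, Finset.sum_apply, Pi.smul_apply, Pi.single_apply,
      smul_eq_mul, mul_ite, mul_one, mul_zero]
    rw [Finset.sum_ite_eq Finset.univ j (fun _ => (m:ℝ)⁻¹)]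
    simp
  have hq2 : q.2 = (m:ℝ)⁻¹ • ∑ i, y i := by
    rw [hqdef, Prod.snd_sum, Finset.smul_sum]
    simp [hg]
  -- Caratheodory
  rw [convexHull_eq_union] at hq
  simp only [Set.mem_iUnion] at hq
  obtain ⟨F, hFT, hFai, hqF⟩ := hq
  rw [Finset.convexHull_eq] at hqF
  obtain ⟨w, hw0, hw1, hwq⟩ := hqF
  rw [Finset.centerMass_eq_of_sum_1 _ _ hw1] at hwq
  simp only [id] at hwq
  -- hwq : ∑ p in F, w p • p = q
  have hsingle_inj : ∀ i i' : Fin m, (Pi.single i 1 : Fin m → ℝ) = Pi.single i' 1 → i = i' := by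
    intro i i' h
    by_contra hne
    have := congrFun h i
    simp [Pi.single_apply, hne, Ne.symm hne] at this
  set idx : (Fin m → ℝ) × (Fin n → ℝ) → Fin m :=
    fun p => if h : ∃ i, p.1 = Pi.single i 1 then h.choose else ⟨0, by omega⟩ with hidxdef
  have hidx : ∀ p ∈ F, p.1 = Pi.single (idx p) 1 ∧ p.2 ∈ A (idx p) := by
    intro p hp
    have hpT := hFT hp
    rw [hT] at hpT
    simp only [Set.mem_iUnion, Set.mem_prod, Set.mem_singleton_iff] at hpT
    obtain ⟨i, h1, h2⟩ := hpT
    have hex : ∃ i, p.1 = Pi.single i 1 := ⟨i, h1⟩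
    have hchoose : p.1 = Pi.single (idx p) 1 := by
      rw [hidxdef]
      simp only [dif_pos hex]
      exact hex.choose_spec
    have : i = idx p := hsingle_inj _ _ (h1.symm.trans hchoose)
    exact ⟨hchoose, this ▸ h2⟩
  set Fi : Fin m → Finset ((Fin m → ℝ) × (Fin n → ℝ)) :=
    fun i => F.filter (fun p => idx p = i) with hFidef
  have hwfiber : ∀ i, ∑ p ∈ Fi i, w p = (m:ℝ)⁻¹ := by
    intro i
    have h1 : q.1 i = ∑ p ∈ F, w p * p.1 i := by
      rw [hwq.symm, Prod.fst_sum]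
      simp [Finset.sum_apply]
    have h2 : ∀ p ∈ F, w p * p.1 i = if idx p = i then w p else 0 := by
      intro p hp
      rw [(hidx p hp).1, Pi.single_apply]
      by_cases h : idx p = i
      · simp [h]
      · simp [h, Ne.symm h]
    rw [Finset.sum_congr rfl h2, ← Finset.sum_filter] at h1
    rw [hFidef]
    rw [← h1, hq1]
  have hFine : ∀ i, (Fi i).Nonempty := by
    intro i
    rw [Finset.nonempty_iff_ne_empty]
    intro hemp
    have h0 := hwfiber i
    rw [hemp, Finset.sum_empty] at h0
    exact (inv_ne_zero hm0) h0.symm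
  set b : Fin m → (Fin m → ℝ) × (Fin n → ℝ) := fun i => (hFine i).choose with hbdef
  have hbmem : ∀ i, b i ∈ Fi i := fun i => (hFine i).choose_spec
  have hbF : ∀ i, b i ∈ F := by
    intro i
    have := hbmem i
    rw [hFidef] at this
    exact (Finset.mem_filter.mp this).1
  have hbidx : ∀ i, idx (b i) = i := by
    intro i
    have := hbmem i
    rw [hFidef] at this
    exact (Finset.mem_filter.mp this).2
  set F' : Finset ((Fin m → ℝ) × (Fin n → ℝ)) := F \ Finset.image b Finset.univ with hF'def
  have hF'F : F' ⊆ F := Finset.sdiff_subset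
  have hF'nb : ∀ p ∈ F', ∀ i, b i ≠ p := by
    intro p hp i hbp
    rw [hF'def] at hp
    exact (Finset.mem_sdiff.mp hp).2 (Finset.mem_image.mpr ⟨i, Finset.mem_univ i, hbp⟩)
  -- linear independence of difference vectors
  have hcard' : F'.card ≤ n := by
    set v : F' → (Fin n → ℝ) := fun p => (p : (Fin m → ℝ) × (Fin n → ℝ)).2 - (b (idx p)).2
      with hvdef
    have hli : LinearIndependent ℝ v := by
      rw [Fintype.linearIndependent_iff]
      intro c hc
      set cg : (Fin m → ℝ) × (Fin n → ℝ) → ℝ :=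
        fun p => if h : p ∈ F' then c ⟨p, h⟩ else 0 with hcgdef
      set W : (Fin m → ℝ) × (Fin n → ℝ) → ℝ :=
        fun p => cg p - ∑ q ∈ F', (if b (idx q) = p then cg q else 0) with hWdef
      have hcg0 : ∀ p ∈ F, p ∉ F' → cg p = 0 := by
        intro p _ hp'
        rw [hcgdef]
        simp [hp']
      have h1 : ∑ p ∈ F, cg p = ∑ p ∈ F', cg p :=
        (Finset.sum_subset hF'F hcg0).symm
      have h2 : ∀ q ∈ F', ∑ p ∈ F, (if b (idx q) = p then cg q else 0) = cg q := by
        intro q _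
        rw [Finset.sum_ite_eq F (b (idx q)) (fun _ => cg q), if_pos (hbF (idx q))]
      have hWsum : ∑ p ∈ F, W p = 0 := by
        rw [hWdef]
        simp only
        rw [Finset.sum_sub_distrib, Finset.sum_comm, Finset.sum_congr rfl h2, ← h1, sub_self]
      have hWvec : ∑ p ∈ F, W p • p = ∑ q ∈ F', (cg q • q - cg q • b (idx q)) := by
        have e1 : ∀ p ∈ F, W p • p
            = cg p • p - ∑ q ∈ F', (if b (idx q) = p then cg q • p else 0) := by
          intro p _
          rw [hWdef]
          simp only
          rw [sub_smul, Finset.sum_smul]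
          congr 1
          refine Finset.sum_congr rfl fun q _ => ?_
          rw [ite_smul, zero_smul]
        have e2 : ∀ q ∈ F', ∑ p ∈ F, (if b (idx q) = p then cg q • p else 0)
            = cg q • b (idx q) := by
          intro q _
          rw [Finset.sum_ite_eq F (b (idx q)) (fun p => cg q • p), if_pos (hbF (idx q))]
        have e3 : ∑ p ∈ F, cg p • p = ∑ p ∈ F', cg p • p :=
          (Finset.sum_subset hF'F (fun p hp hp' => by rw [hcg0 p hp hp', zero_smul])).symm
        rw [Finset.sum_congr rfl e1, Finset.sum_sub_distrib, Finset.sum_comm,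
          Finset.sum_congr rfl e2, e3, ← Finset.sum_sub_distrib]
      have hWvec0 : ∑ q ∈ F', (cg q • q - cg q • b (idx q)) = 0 := by
        have ecg : ∀ q : F', cg ↑q = c q := by
          intro q
          rw [hcgdef]
          simp [q.2]
        apply Prod.ext
        · rw [Prod.fst_sum, Prod.fst_zero]
          refine Finset.sum_eq_zero fun p hp => ?_
          have e1 : (p : (Fin m → ℝ) × (Fin n → ℝ)).1 = Pi.single (idx p) 1 :=
            (hidx p (hF'F hp)).1
          have e2 : (b (idx p)).1 = Pi.single (idx p) 1 := by
            have := (hidx _ (hbF (idx p))).1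
            rwa [hbidx] at this
          rw [Prod.fst_sub, Prod.smul_fst, Prod.smul_fst, e1, e2, sub_self]
        · rw [Prod.snd_sum, Prod.snd_zero]
          have e4 : ∀ p ∈ F', (cg p • p - cg p • b (idx p)).2
              = cg p • ((p : (Fin m → ℝ) × (Fin n → ℝ)).2 - (b (idx p)).2) := by
            intro p _
            rw [Prod.snd_sub, Prod.smul_snd, Prod.smul_snd, smul_sub]
          rw [Finset.sum_congr rfl e4,
            ← Finset.sum_attach F' (fun p => cg p • (p.2 - (b (idx p)).2))]
          rw [Finset.univ_eq_attach] at hc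
          rw [← hc]
          exact Finset.sum_congr rfl fun p _ => by rw [ecg p, hvdef]
      have hWzero : ∀ p ∈ F.attach, W ↑p = 0 := by
        have hs0 : ∑ p ∈ F.attach, W ↑p = 0 := by
          rw [Finset.sum_attach F (fun p => W p)]
          exact hWsum
        refine hFai F.attach (fun p => W ↑p) hs0 ?_
        rw [Finset.weightedVSub_eq_linear_combination _ hs0]
        rw [Finset.sum_attach F (fun p => W p • p), hWvec, hWvec0]
      intro p
      have hpF : (p : (Fin m → ℝ) × (Fin n → ℝ)) ∈ F := hF'F p.2
      have hW := hWzero ⟨p, hpF⟩ (Finset.mem_attach _ _)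
      rw [hWdef] at hW
      simp only at hW
      have hz : ∑ q ∈ F', (if b (idx q) = (p : (Fin m → ℝ) × (Fin n → ℝ)) then cg q else 0)
          = 0 :=
        Finset.sum_eq_zero fun q _ => if_neg (hF'nb _ p.2 _)
      rw [hz, sub_zero] at hW
      have ecg : cg ↑p = c p := by
        rw [hcgdef]
        simp [p.2]
      rwa [ecg] at hW
    have hcard := hli.fintype_card_le_finrank
    rwa [Fintype.card_coe, Module.finrank_pi, Fintype.card_fin] at hcard
  -- the bad set
  set Bad : Finset (Fin m) := Finset.univ.filter (fun i => ∃ p ∈ Fi i, p ≠ b i) with hBaddef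
  have hBadcard : Bad.card ≤ n := by
    refine le_trans ?_ hcard'
    set pick : Fin m → (Fin m → ℝ) × (Fin n → ℝ) :=
      fun i => if h : ∃ p ∈ Fi i, p ≠ b i then h.choose else b i with hpickdef
    have hpick : ∀ i ∈ Bad, pick i ∈ Fi i ∧ pick i ≠ b i := by
      intro i hi
      rw [hBaddef, Finset.mem_filter] at hi
      obtain ⟨-, hex⟩ := hi
      rw [hpickdef]
      simp only [dif_pos hex]
      exact ⟨hex.choose_spec.1, hex.choose_spec.2⟩
    have hpickidx : ∀ i ∈ Bad, idx (pick i) = i := by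
      intro i hi
      have := (hpick i hi).1
      rw [hFidef] at this
      exact (Finset.mem_filter.mp this).2
    refine Finset.card_le_card_of_injOn pick ?_ ?_
    · intro i hi
      rw [hF'def, Finset.mem_coe, Finset.mem_sdiff]
      constructor
      · have := (hpick i hi).1
        rw [hFidef] at this
        exact (Finset.mem_filter.mp this).1
      · intro hmem
        obtain ⟨j, -, hj⟩ := Finset.mem_image.mp hmem
        have : j = i := by rw [← hbidx j, hj, hpickidx i hi]
        rw [this] at hj
        exact (hpick i hi).2 hj.symm
    · intro i hi j hj hij
      rw [← hpickidx i hi, ← hpickidx j hj, hij]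
  have hBadm : Bad.card ≤ m := le_trans (Finset.card_le_univ Bad) (by simp)
  -- the decomposition
  set u : Fin m → (Fin n → ℝ) := fun i => ∑ p ∈ Fi i, ((m:ℝ) * w p) • p.2 with hudef
  have hFiF : ∀ i, ∀ p ∈ Fi i, p ∈ F := by
    intro i p hp
    rw [hFidef] at hp
    exact (Finset.mem_filter.mp hp).1
  have humem : ∀ i, u i ∈ convexHull ℝ (A i) := by
    intro i
    refine (convex_convexHull ℝ (A i)).sum_mem
      (fun p hp => mul_nonneg (by positivity) (hw0 p (hFiF i p hp))) ?_ ?_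
    · rw [← Finset.mul_sum, hwfiber i, mul_inv_cancel₀ hm0]
    · intro p hp
      have h2 := (hidx p (hFiF i p hp)).2
      have h3 : idx p = i := by
        rw [hFidef] at hp
        exact (Finset.mem_filter.mp hp).2
      rw [h3] at h2
      exact subset_convexHull ℝ (A i) h2
  have husum : ∑ i, u i = ∑ i, y i := by
    have h1 : ∑ i, u i = ∑ p ∈ F, ((m:ℝ) * w p) • p.2 := by
      rw [hudef]
      exact Finset.sum_fiberwise_of_maps_to (fun p _ => Finset.mem_univ (idx p)) _
    have h2 : ∑ p ∈ F, ((m:ℝ) * w p) • p.2 = (m:ℝ) • ∑ p ∈ F, w p • p.2 := by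
      rw [Finset.smul_sum]
      exact Finset.sum_congr rfl fun p _ => by rw [mul_smul]
    have h3 : ∑ p ∈ F, w p • p.2 = q.2 := by
      rw [← hwq, Prod.snd_sum]
      exact Finset.sum_congr rfl fun p _ => by rw [Prod.smul_snd]
    rw [h1, h2, h3, hq2, smul_smul, mul_inv_cancel₀ hm0, one_smul]
  have hugood : ∀ i ∉ Bad, u i ∈ A i := by
    intro i hi
    have hall : ∀ p ∈ Fi i, p = b i := by
      intro p hp
      by_contra hne
      exact hi (by rw [hBaddef]; exact Finset.mem_filter.mpr ⟨Finset.mem_univ i, p, hp, hne⟩)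
    have hFib : Fi i = {b i} := by
      apply Finset.eq_singleton_iff_unique_mem.mpr
      exact ⟨hbmem i, hall⟩
    have hwb : w (b i) = (m:ℝ)⁻¹ := by
      have := hwfiber i
      rw [hFib, Finset.sum_singleton] at this
      exact this
    have : u i = (b i).2 := by
      rw [hudef]
      simp only
      rw [hFib, Finset.sum_singleton, hwb, mul_inv_cancel₀ hm0, one_smul]
    rw [this]
    have h2 := (hidx _ (hbF i)).2
    rwa [hbidx] at h2
  exact ⟨u, Bad, humem, hugood, hBadcard, husum⟩

/-- Integral-point version of the ℓ∞ Shapley–Folkman-type theorem. -/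
theorem stmt10 {n m : ℕ} (hn : 2 ≤ n) (hm : 1 ≤ m)
    (S : Fin m → Set (Fin n → ℤ)) (hS : ∀ i, IntegrallyConvex (S i))
    (x : Fin n → ℤ) (hx : coeZR x ∈ convexHull ℝ (coeZR '' minkSumZ S)) :
    ∃ z ∈ minkSumZ S, ‖coeZR x - coeZR z‖ ≤ (min n m : ℝ) - 1 := by
  classical
  set A : Fin m → Set (Fin n → ℝ) := fun i => coeZR '' (S i) with hA
  -- Step 1: decompose x over the convex hulls of the summands
  have hxB : ∃ y : Fin m → (Fin n → ℝ),
      (∀ i, y i ∈ convexHull ℝ (A i)) ∧ coeZR x = ∑ i, y i := by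
    set B : Set (Fin n → ℝ) := {v | ∃ y : Fin m → (Fin n → ℝ),
      (∀ i, y i ∈ convexHull ℝ (A i)) ∧ v = ∑ i, y i} with hB
    have hBconv : Convex ℝ B := by
      rintro v ⟨yv, hyv, rfl⟩ u ⟨yu, hyu, rfl⟩ a c ha hc hac
      refine ⟨fun i => a • yv i + c • yu i, fun i =>
        (convex_convexHull ℝ (A i)) (hyv i) (hyu i) ha hc hac, ?_⟩
      rw [Finset.sum_add_distrib, ← Finset.smul_sum, ← Finset.smul_sum]
    have hsub : coeZR '' minkSumZ S ⊆ B := by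
      rintro _ ⟨v, ⟨zf, hzf, rfl⟩, rfl⟩
      refine ⟨fun i => coeZR (zf i), fun i =>
        subset_convexHull ℝ (A i) ⟨zf i, hzf i, rfl⟩, ?_⟩
      funext j
      simp only [coeZR, Finset.sum_apply]
      push_cast
      rfl
    exact convexHull_min hsub hBconv hx
  obtain ⟨y, hy, hxy⟩ := hxB
  -- Step 2: Shapley–Folkman
  obtain ⟨u, Bad, humem, hugood, hBadn, husum⟩ := sf_aux hm A y hy
  have hBadm : Bad.card ≤ m := le_trans (Finset.card_le_univ Bad) (by simp)
  have hmin1 : 1 ≤ min n m := le_min (by omega) hm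
  -- Step 3: choose integer points
  have hz : ∀ i, ∃ zi ∈ S i, (∀ j, |u i j - (zi j : ℝ)| < 1) ∧
      (i ∉ Bad → ∀ j, u i j = (zi j : ℝ)) := by
    intro i
    by_cases hiB : i ∈ Bad
    · have h1 := (hS i).2 (u i) (humem i)
      have hne : (coeZR '' (S i ∩ intNbhd (u i))).Nonempty := by
        by_contra hemp
        rw [Set.not_nonempty_iff_eq_empty] at hemp
        rw [hemp, convexHull_empty] at h1
        exact h1
      obtain ⟨-, ⟨zi, ⟨hzi1, hzi2⟩, rfl⟩⟩ := hne
      exact ⟨zi, hzi1, fun j => hzi2 j, fun h => absurd hiB h⟩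
    · obtain ⟨zi, hzi1, hzi2⟩ := hugood i hiB
      refine ⟨zi, hzi1, fun j => ?_, fun _ j => by rw [← hzi2]; rfl⟩
      rw [← hzi2]
      simp [coeZR]
  choose zf hzf1 hzf2 hzf3 using hz
  refine ⟨∑ i, zf i, ⟨zf, hzf1, rfl⟩, ?_⟩
  have hnonneg : (0:ℝ) ≤ (min n m : ℝ) - 1 := by
    have : (1:ℝ) ≤ (min n m : ℕ) := by exact_mod_cast hmin1
    push_cast at this ⊢
    linarith
  rw [pi_norm_le_iff_of_nonneg hnonneg]
  intro j
  rw [Pi.sub_apply, Real.norm_eq_abs]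
  -- coordinatewise computation
  have hco : coeZR x j - coeZR (∑ i, zf i) j = ∑ i ∈ Bad, (u i j - (zf i j : ℝ)) := by
    have h1 : coeZR x j = ∑ i, u i j := by
      rw [hxy, ← husum, Finset.sum_apply]
    have h2 : coeZR (∑ i, zf i) j = ∑ i, (zf i j : ℝ) := by
      simp only [coeZR, Finset.sum_apply]
      push_cast
      rfl
    rw [h1, h2, ← Finset.sum_sub_distrib]
    refine (Finset.sum_subset (Finset.subset_univ Bad) ?_).symm
    intro i _ hiB
    rw [hzf3 i hiB j, sub_self]
  have habs : |∑ i ∈ Bad, (u i j - (zf i j : ℝ))| < (min n m : ℕ) := by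
    rcases Finset.eq_empty_or_nonempty Bad with hBe | hBne
    · rw [hBe, Finset.sum_empty, abs_zero]
      exact_mod_cast hmin1
    · calc |∑ i ∈ Bad, (u i j - (zf i j : ℝ))|
          ≤ ∑ i ∈ Bad, |u i j - (zf i j : ℝ)| := Finset.abs_sum_le_sum_abs _ _
        _ < ∑ _i ∈ Bad, (1:ℝ) :=
            Finset.sum_lt_sum_of_nonempty hBne (fun i _ => hzf2 i j)
        _ = Bad.card := by rw [Finset.sum_const, nsmul_eq_mul, mul_one]
        _ ≤ (min n m : ℕ) := by exact_mod_cast le_min hBadn hBadm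
  set d : ℤ := x j - (∑ i, zf i) j with hd
  have hdr : coeZR x j - coeZR (∑ i, zf i) j = (d : ℝ) := by
    rw [hd]
    push_cast
    rfl
  rw [hdr]
  have habs' : |(d : ℝ)| < ((min n m : ℕ) : ℝ) := by
    rw [← hdr, hco]
    exact habs
  have h2 : |d| < ((min n m : ℕ) : ℤ) := by exact_mod_cast habs'
  have h3 : |d| ≤ ((min n m : ℕ) : ℤ) - 1 := by omega
  have h4 : ((|d| : ℤ) : ℝ) ≤ ((min n m : ℕ) : ℝ) - 1 := by exact_mod_cast h3
  rw [Int.cast_abs] at h4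
  refine le_trans h4 ?_
  push_cast
  simp
end
end

section
/- Let S_1, …, S_m be integrally convex subsets of ℤ^n with n ≥ 1, and W = S_1 + ⋯ + S_m. For any x ∈ conv(W), there exists z ∈ W with ‖x − z‖_2 ≤ (1/2)·√(n·min(n,m)). -/
open scoped BigOperators Pointwise

noncomputable section

/-- Coercion of an integer vector into Euclidean space (ℓ² norm). -/
def coeZE {n : ℕ} (v : Fin n → ℤ) : EuclideanSpace ℝ (Fin n) := WithLp.toLp 2 (fun i => (v i : ℝ))


variable {V : Type} [AddCommGroup V] [Module ℝ V]

def SFRep {m : ℕ} (T : Fin m → Set V) (c : V) (w : Fin m → (V →₀ ℝ)) : Prop :=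
  (∀ i v, 0 ≤ w i v) ∧ (∀ i, ↑(w i).support ⊆ T i) ∧
    (∀ i, ((w i).sum fun _ r => r) = 1) ∧ (∑ i, (w i).sum fun v r => r • v) = c

lemma sf_min_card {m : ℕ} [FiniteDimensional ℝ V] {T : Fin m → Set V} {c : V}
    {w : Fin m → (V →₀ ℝ)} (hw : SFRep T c w)
    (hmin : ∀ w', SFRep T c w' → ∑ i, (w i).support.card ≤ ∑ i, (w' i).support.card) :
    (Finset.univ.filter fun i => 2 ≤ (w i).support.card).card ≤ Module.finrank ℝ V := by
  classical
  by_contra hcard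
  push_neg at hcard
  set B : Finset (Fin m) := Finset.univ.filter (fun i => 2 ≤ (w i).support.card) with hB
  have hchoice : ∀ k : ↥B, ∃ t s : V, t ∈ (w k).support ∧ s ∈ (w k).support ∧ t ≠ s := by
    rintro ⟨i, hi⟩
    have h2 : 1 < (w i).support.card := by
      have := (Finset.mem_filter.mp hi).2; omega
    obtain ⟨a, ha, b, hb, hab⟩ := Finset.one_lt_card.mp h2
    exact ⟨a, b, ha, hb, hab⟩
  choose tf sf htf hsf htsne using hchoice
  have hdep : ¬ LinearIndependent ℝ (fun k : ↥B => tf k - sf k) := by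
    intro hli
    have h1 := hli.fintype_card_le_finrank
    rw [Fintype.card_coe] at h1
    omega
  obtain ⟨g, hg0, k₀, hk₀⟩ := Fintype.not_linearIndependent_iff.mp hdep
  set F : Finset ↥B := Finset.univ.filter (fun k => g k ≠ 0) with hF
  have hFne : F.Nonempty := ⟨k₀, by simp [hF, hk₀]⟩
  set r : ↥B → ℝ := fun k => if 0 < g k then w k (sf k) / g k else w k (tf k) / (-g k) with hr
  obtain ⟨j, hjF, hjmin⟩ := F.exists_min_image r hFne
  set ε : ℝ := r j with hε
  have hgj : g j ≠ 0 := by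
    have := (Finset.mem_filter.mp hjF).2; exact this
  have hwpos : ∀ (k : ↥B) v, v ∈ (w k).support → 0 < w (↑k) v := fun k v hv =>
    lt_of_le_of_ne (hw.1 (↑k) v) (Ne.symm (Finsupp.mem_support_iff.mp hv))
  have hεpos : 0 < ε := by
    simp only [hε, hr]
    by_cases hp : 0 < g j
    · rw [if_pos hp]; exact div_pos (hwpos j _ (hsf j)) hp
    · rw [if_neg hp]
      have hn : g j < 0 := lt_of_le_of_ne (not_lt.mp hp) hgj
      exact div_pos (hwpos j _ (htf j)) (by linarith)
  have hεle : ∀ k ∈ F, ε ≤ r k := hjmin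
  -- key nonnegativity bounds
  have hkey : ∀ k : ↥B, 0 ≤ w (↑k) (tf k) + ε * g k ∧ 0 ≤ w (↑k) (sf k) - ε * g k := by
    intro k
    by_cases hgk : g k = 0
    · rw [hgk]; constructor <;> simpa using hw.1 (↑k) _
    have hkF : k ∈ F := by simp [hF, hgk]
    have hle := hεle k hkF
    rcases lt_or_gt_of_ne hgk with hneg | hpos
    · simp only [hr] at hle
      rw [if_neg (by linarith)] at hle
      have h2 : ε * (-g k) ≤ w (↑k) (tf k) := (le_div_iff₀ (by linarith)).mp hle
      constructor
      · nlinarith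
      · nlinarith [hw.1 (↑k) (sf k), hεpos]
    · simp only [hr] at hle
      rw [if_pos hpos] at hle
      have h2 : ε * g k ≤ w (↑k) (sf k) := (le_div_iff₀ hpos).mp hle
      constructor
      · nlinarith [hw.1 (↑k) (tf k), hεpos]
      · nlinarith
  -- the perturbed representation
  set w' : Fin m → (V →₀ ℝ) := fun i =>
    if h : i ∈ B then
      w i + (Finsupp.single (tf ⟨i, h⟩) (ε * g ⟨i, h⟩) +
             Finsupp.single (sf ⟨i, h⟩) (-(ε * g ⟨i, h⟩)))
    else w i with hw'
  have hw's : ∀ k : ↥B, w' (↑k) = w (↑k) + (Finsupp.single (tf k) (ε * g k) +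
      Finsupp.single (sf k) (-(ε * g k))) := by
    rintro ⟨i, h⟩
    rw [hw']; simp only [dif_pos h]
  have happ : ∀ (k : ↥B) v, w' (↑k) v =
      w (↑k) v + ((if tf k = v then ε * g k else 0) + (if sf k = v then -(ε * g k) else 0)) := by
    intro k v
    rw [hw's k]
    simp only [Finsupp.add_apply, Finsupp.single_apply]
  have hsupp : ∀ k : ↥B, (w' ↑k).support ⊆ (w ↑k).support := by
    intro k v hv
    by_contra hns
    have hwv : w (↑k) v = 0 := Finsupp.notMem_support_iff.mp hns
    have hvt : tf k ≠ v := fun h => hns (h ▸ htf k)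
    have hvs : sf k ≠ v := fun h => hns (h ▸ hsf k)
    apply Finsupp.mem_support_iff.mp hv
    rw [happ k v, if_neg hvt, if_neg hvs, hwv]; ring
  -- SFRep for w'
  have hrep' : SFRep T c w' := by
    refine ⟨?_, ?_, ?_, ?_⟩
    · intro i v
      by_cases h : i ∈ B
      · have := happ ⟨i, h⟩ v
        rw [this]
        rcases hkey ⟨i, h⟩ with ⟨h1, h2⟩
        by_cases hvt : tf ⟨i, h⟩ = v
        · rw [if_pos hvt, if_neg (by rw [← hvt]; exact fun hc => (htsne ⟨i,h⟩) hc.symm)]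
          rw [← hvt]; simpa using h1
        · rw [if_neg hvt]
          by_cases hvs : sf ⟨i, h⟩ = v
          · rw [if_pos hvs, ← hvs]; simpa [sub_eq_add_neg] using h2
          · rw [if_neg hvs]; simpa using hw.1 i v
      · rw [hw']; simp only [dif_neg h]; exact hw.1 i v
    · intro i
      by_cases h : i ∈ B
      · exact Set.Subset.trans (Finset.coe_subset.mpr (hsupp ⟨i, h⟩)) (hw.2.1 i)
      · rw [hw']; simp only [dif_neg h]; exact hw.2.1 i
    · intro i
      by_cases h : i ∈ B
      · rw [hw's ⟨i, h⟩]
        rw [Finsupp.sum_add_index' (fun _ => rfl) (fun _ _ _ => rfl),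
            Finsupp.sum_add_index' (fun _ => rfl) (fun _ _ _ => rfl),
            Finsupp.sum_single_index rfl, Finsupp.sum_single_index rfl]
        rw [hw.2.2.1 i]; ring
      · rw [hw']; simp only [dif_neg h]; exact hw.2.2.1 i
    · have hterm : ∀ i, ((w' i).sum fun v r => r • v) =
          ((w i).sum fun v r => r • v) +
            (if h : i ∈ B then (ε * g ⟨i, h⟩) • (tf ⟨i, h⟩ - sf ⟨i, h⟩) else 0) := by
        intro i
        by_cases h : i ∈ B
        · rw [hw's ⟨i, h⟩, dif_pos h]
          rw [Finsupp.sum_add_index' (fun v => zero_smul ℝ v) (fun v a b => add_smul a b v),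
              Finsupp.sum_add_index' (fun v => zero_smul ℝ v) (fun v a b => add_smul a b v),
              Finsupp.sum_single_index (h := fun v r => r • v) (zero_smul ℝ (tf ⟨i, h⟩)),
              Finsupp.sum_single_index (h := fun v r => r • v) (zero_smul ℝ (sf ⟨i, h⟩))]
          rw [smul_sub, neg_smul]; abel
        · rw [hw', dif_neg h]; simp only [dif_neg h]; rw [add_zero]
      rw [Finset.sum_congr rfl (fun i _ => hterm i), Finset.sum_add_distrib, hw.2.2.2]
      have hz : (∑ i : Fin m,
          (if h : i ∈ B then (ε * g ⟨i, h⟩) • (tf ⟨i, h⟩ - sf ⟨i, h⟩) else 0)) = 0 := by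
        have h1 : (∑ i : Fin m,
            (if h : i ∈ B then (ε * g ⟨i, h⟩) • (tf ⟨i, h⟩ - sf ⟨i, h⟩) else 0)) =
            ∑ i ∈ B, (if h : i ∈ B then (ε * g ⟨i, h⟩) • (tf ⟨i, h⟩ - sf ⟨i, h⟩) else 0) :=
          (Finset.sum_subset (Finset.subset_univ B) (fun i _ hi => dif_neg hi)).symm
        rw [h1, ← Finset.sum_attach B
          (fun i => if h : i ∈ B then (ε * g ⟨i, h⟩) • (tf ⟨i, h⟩ - sf ⟨i, h⟩) else 0)]
        have h2 : ∀ k : ↥B, (if h : (↑k : Fin m) ∈ B then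
            (ε * g ⟨↑k, h⟩) • (tf ⟨↑k, h⟩ - sf ⟨↑k, h⟩) else 0) = ε • (g k • (tf k - sf k)) := by
          rintro ⟨i, hi⟩
          rw [dif_pos hi, smul_smul]
        rw [Finset.sum_congr rfl (fun k _ => h2 k), ← Finset.smul_sum]
        rw [← Finset.univ_eq_attach, hg0, smul_zero]
      rw [hz, add_zero]
  -- strict decrease of cost at j
  have hstrict : (w' ↑j).support.card < (w ↑j).support.card := by
    have hv0 : ∃ v₀, v₀ ∈ (w ↑j).support ∧ w' ↑j v₀ = 0 := by
      by_cases hp : 0 < g j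
      · refine ⟨sf j, hsf j, ?_⟩
        rw [happ j (sf j), if_neg (fun h => htsne j h), if_pos rfl]
        have hεval : ε = w (↑j) (sf j) / g j := by simp only [hε, hr, if_pos hp]
        rw [hεval]
        field_simp
        ring
      · refine ⟨tf j, htf j, ?_⟩
        rw [happ j (tf j), if_pos rfl, if_neg (fun h => htsne j h.symm)]
        have hεval : ε = w (↑j) (tf j) / -g j := by simp only [hε, hr, if_neg hp]
        rw [hεval]
        rw [div_mul_eq_mul_div, div_neg, mul_div_assoc, div_self hgj]
        ring
    obtain ⟨v₀, hv₀s, hv₀z⟩ := hv0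
    apply Finset.card_lt_card
    rw [Finset.ssubset_iff_of_subset (hsupp j)]
    exact ⟨v₀, hv₀s, fun hc => (Finsupp.mem_support_iff.mp hc) hv₀z⟩
  have hlt : ∑ i, (w' i).support.card < ∑ i, (w i).support.card := by
    apply Finset.sum_lt_sum
    · intro i _
      by_cases h : i ∈ B
      · exact Finset.card_le_card (hsupp ⟨i, h⟩)
      · rw [hw']; simp only [dif_neg h]; exact le_rfl
    · exact ⟨↑j, Finset.mem_univ _, hstrict⟩
  have := hmin w' hrep'
  omega

lemma exists_finsupp_of_mem_convexHull' {s : Set V} {x : V} (hx : x ∈ convexHull ℝ s) :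
    ∃ p : V →₀ ℝ, (∀ v, 0 ≤ p v) ∧ ↑p.support ⊆ s ∧ (p.sum fun _ r => r) = 1 ∧
      (p.sum fun v r => r • v) = x := by
  classical
  rw [mem_convexHull_iff_exists_fintype] at hx
  obtain ⟨ι, _, w, z, hw0, hw1, hz, hxx⟩ := hx
  refine ⟨∑ k, Finsupp.single (z k) (w k), ?_, ?_, ?_, ?_⟩
  · intro v
    rw [Finsupp.finset_sum_apply]
    exact Finset.sum_nonneg fun k _ => by
      rw [Finsupp.single_apply]; split <;> simp [hw0 k]
  · intro v hv
    simp only [Finset.mem_coe] at hv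
    have := Finsupp.support_finset_sum (s := Finset.univ)
      (f := fun k => Finsupp.single (z k) (w k)) hv
    rw [Finset.mem_biUnion] at this
    obtain ⟨k, -, hk⟩ := this
    have := Finsupp.support_single_subset hk
    simp only [Finset.mem_singleton] at this
    subst this; exact hz k
  · rw [← Finsupp.sum_finset_sum_index (fun _ => rfl) (fun _ _ _ => rfl)]
    simpa [Finsupp.sum_single_index] using hw1
  · rw [← Finsupp.sum_finset_sum_index (fun v => zero_smul ℝ v) (fun v a b => add_smul a b v)]
    simpa [Finsupp.sum_single_index] using hxx

open scoped Classical in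
theorem shapley_folkman [FiniteDimensional ℝ V] {m : ℕ} (T : Fin m → Set V) (xs : Fin m → V)
    (hxs : ∀ i, xs i ∈ convexHull ℝ (T i)) :
    ∃ y : Fin m → V, (∀ i, y i ∈ convexHull ℝ (T i)) ∧ (∑ i, y i) = (∑ i, xs i) ∧
      (Finset.univ.filter fun i => y i ∉ T i).card ≤ Module.finrank ℝ V := by
  classical
  have hex : ∃ N : ℕ, ∃ w : Fin m → (V →₀ ℝ), SFRep T (∑ i, xs i) w ∧
      (∑ i, (w i).support.card) = N := by
    choose p hp0 hps hp1 hpx using fun i => exists_finsupp_of_mem_convexHull' (hxs i)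
    exact ⟨_, p, ⟨fun i v => hp0 i v, hps, hp1,
      by rw [Finset.sum_congr rfl fun i _ => hpx i]⟩, rfl⟩
  obtain ⟨w, hwrep, hwN⟩ := Nat.find_spec hex
  have hmin : ∀ w', SFRep T (∑ i, xs i) w' →
      ∑ i, (w i).support.card ≤ ∑ i, (w' i).support.card := by
    intro w' hw'
    rw [hwN]
    exact Nat.find_min' hex ⟨w', hw', rfl⟩
  have hcard := sf_min_card hwrep hmin
  refine ⟨fun i => (w i).sum fun v r => r • v, ?_, hwrep.2.2.2, ?_⟩
  · intro i
    have hsum1 : ∑ v ∈ (w i).support, w i v = 1 := hwrep.2.2.1 i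
    have hmem : (w i).support.centerMass (w i) id ∈ convexHull ℝ (T i) :=
      Finset.centerMass_mem_convexHull _ (fun v _ => hwrep.1 i v)
        (by rw [hsum1]; norm_num) (fun v hv => hwrep.2.1 i hv)
    rw [Finset.centerMass_eq_of_sum_1 _ _ hsum1] at hmem
    simpa [Finsupp.sum] using hmem
  · refine le_trans (Finset.card_le_card ?_) hcard
    intro i hi
    rw [Finset.mem_filter] at hi ⊢
    refine ⟨Finset.mem_univ _, ?_⟩
    by_contra hc
    push_neg at hc
    have hne : (w i).support.Nonempty := by
      rw [Finsupp.support_nonempty_iff]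
      intro h0
      have := hwrep.2.2.1 i
      rw [h0] at this
      simp [Finsupp.sum_zero_index] at this
    have h1 : (w i).support.card = 1 := by
      have := Finset.card_pos.mpr hne; omega
    obtain ⟨v, hv⟩ := Finset.card_eq_one.mp h1
    have hvmem : v ∈ (w i).support := by rw [hv]; exact Finset.mem_singleton_self v
    have hw1 : w i v = 1 := by
      have := hwrep.2.2.1 i
      rwa [Finsupp.sum, hv, Finset.sum_singleton] at this
    have : ((w i).sum fun u r => r • u) = v := by
      rw [Finsupp.sum, hv, Finset.sum_singleton, hw1, one_smul]
    apply hi.2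
    show ((w i).sum fun u r => r • u) ∈ T i
    rw [this]
    exact hwrep.2.1 i hvmem

lemma single_rep {n : ℕ} {P : Set (Fin n → ℤ)} {x : Fin n → ℝ}
    (hP : ∀ p ∈ P, ∀ j, |x j - (p j : ℝ)| < 1)
    (hx : x ∈ convexHull ℝ (coeZR '' P)) :
    ∃ (ι : Type) (_ : Fintype ι) (w : ι → ℝ) (p : ι → Fin n → ℤ),
      (∀ k, 0 ≤ w k) ∧ (∑ k, w k) = 1 ∧ (∀ k, p k ∈ P) ∧
      (∀ j, (∑ k, w k * ((p k j : ℝ) - x j)) = 0) ∧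
      (∀ j, (∑ k, w k * (x j - (p k j : ℝ))^2) ≤ 1/4) := by
  rw [mem_convexHull_iff_exists_fintype] at hx
  obtain ⟨ι, hι, w, z, hw0, hw1, hz, hxx⟩ := hx
  choose p hpP hpz using fun k => hz k
  refine ⟨ι, hι, w, p, hw0, hw1, hpP, ?_, ?_⟩
  all_goals
    have hmean : ∀ j, (∑ k, w k * (p k j : ℝ)) = x j := by
      intro j
      have hj := congrFun hxx j
      rw [Finset.sum_apply] at hj
      rw [← hj]
      refine Finset.sum_congr rfl fun k _ => ?_
      have := congrFun (hpz k) j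
      rw [Pi.smul_apply, smul_eq_mul, ← this]
      rfl
  · intro j
    have e1 : ∑ k, w k * ((p k j : ℝ) - x j) = (∑ k, w k * (p k j : ℝ)) - (∑ k, w k) * x j := by
      rw [Finset.sum_mul, ← Finset.sum_sub_distrib]
      exact Finset.sum_congr rfl fun k _ => by ring
    rw [e1, hmean j, hw1]; ring
  · intro j
    set c : ℝ := (⌊x j⌋ : ℝ) + 1/2 with hc
    have hpc : ∀ k, ((p k j : ℝ) - c)^2 = 1/4 := by
      intro k
      have habs := abs_lt.mp (hP (p k) (hpP k) j)
      have hfl : (⌊x j⌋ : ℝ) ≤ x j := Int.floor_le _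
      have hfl2 : x j < (⌊x j⌋ : ℝ) + 1 := Int.lt_floor_add_one _
      have h1 : p k j = ⌊x j⌋ ∨ p k j = ⌊x j⌋ + 1 := by
        have hlow : (⌊x j⌋ : ℝ) - 1 < (p k j : ℝ) := by linarith
        have hhigh : (p k j : ℝ) < (⌊x j⌋ : ℝ) + 2 := by linarith
        have i1 : (⌊x j⌋ : ℤ) - 1 < p k j := by exact_mod_cast hlow
        have i2 : p k j < ⌊x j⌋ + 2 := by exact_mod_cast hhigh
        omega
      rcases h1 with h | h <;> rw [hc, h] <;> push_cast <;> ring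
    have e1 : ∑ k, w k * (x j - (p k j : ℝ))^2 =
        ∑ k, (w k * ((p k j : ℝ) - c)^2 + ((x j - c) * (x j + c)) * w k
          - (2 * (x j - c)) * (w k * (p k j : ℝ))) :=
      Finset.sum_congr rfl fun k _ => by ring
    rw [e1, Finset.sum_sub_distrib, Finset.sum_add_distrib, ← Finset.mul_sum, ← Finset.mul_sum,
      hw1, hmean j]
    have e2 : ∑ k, w k * ((p k j : ℝ) - c)^2 = ∑ k, w k * (1/4) :=
      Finset.sum_congr rfl fun k _ => by rw [hpc k]
    rw [e2, ← Finset.sum_mul, hw1]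
    have e3 := sq_nonneg (x j - c)
    ring_nf
    ring_nf at e3
    linarith

lemma avg_rep {n m : ℕ} (P : Fin m → Set (Fin n → ℤ)) (x : Fin m → Fin n → ℝ)
    (B : Finset (Fin m))
    (h : ∀ i ∈ B, (x i) ∈ convexHull ℝ (coeZR '' P i) ∧ ∀ p ∈ P i, ∀ j, |x i j - (p j : ℝ)| < 1) :
    ∃ (ι : Type) (_ : Fintype ι) (μ : ι → ℝ) (G : ι → Fin m → Fin n → ℤ),
      (∀ k, 0 ≤ μ k) ∧ (∑ k, μ k) = 1 ∧ (∀ k, ∀ i ∈ B, G k i ∈ P i) ∧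
      (∀ j, (∑ k, μ k * (∑ i ∈ B, (x i j - (G k i j : ℝ)))) = 0) ∧
      (∀ j, (∑ k, μ k * (∑ i ∈ B, (x i j - (G k i j : ℝ)))^2) ≤ (B.card : ℝ) / 4) := by
  classical
  induction B using Finset.induction_on with
  | empty =>
    exact ⟨PUnit, inferInstance, fun _ => 1, fun _ _ _ => 0, fun _ => zero_le_one, by simp,
      fun k i hi => absurd hi (Finset.notMem_empty i), by simp, by simp⟩
  | @insert a B ha ih =>
    obtain ⟨ι, hι, μ, G, hμ0, hμ1, hGP, hmean, hvar⟩ :=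
      ih (fun i hi => h i (Finset.mem_insert_of_mem hi))
    obtain ⟨κ, hκ, w, p, hw0, hw1, hpP, hmean1, hvar1⟩ :=
      single_rep (h a (Finset.mem_insert_self a B)).2 (h a (Finset.mem_insert_self a B)).1
    refine ⟨ι × κ, inferInstance, fun kc => μ kc.1 * w kc.2,
      fun kc i => if i = a then p kc.2 else G kc.1 i, ?_, ?_, ?_, ?_, ?_⟩
    · exact fun kc => mul_nonneg (hμ0 kc.1) (hw0 kc.2)
    · rw [Fintype.sum_prod_type]
      have e0 : ∀ k : ι, (∑ c : κ, μ k * w c) = μ k := fun k => by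
        rw [← Finset.mul_sum, hw1, mul_one]
      rw [Finset.sum_congr rfl fun k _ => e0 k]
      exact hμ1
    · rintro kc i hi
      rcases Finset.mem_insert.mp hi with rfl | hiB
      · simp only [if_pos rfl]; exact hpP kc.2
      · have hne : ¬ i = a := fun hc => ha (by rwa [hc] at hiB)
        simp only [if_neg hne]; exact hGP kc.1 i hiB
    all_goals
      have herr : ∀ (k : ι) (c : κ) j,
          (∑ i ∈ insert a B, (x i j - ((if i = a then p c else G k i) j : ℝ)))
            = (x a j - (p c j : ℝ)) + ∑ i ∈ B, (x i j - (G k i j : ℝ)) := by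
        intro k c j
        rw [Finset.sum_insert ha, if_pos rfl]
        congr 1
        refine Finset.sum_congr rfl fun i hi => by rw [if_neg (show ¬ i = a from fun hc => ha (by rwa [hc] at hi))]
    · intro j
      rw [Fintype.sum_prod_type]
      have hterm : ∀ k : ι, (∑ c : κ, μ k * w c *
          (∑ i ∈ insert a B, (x i j - ((if i = a then p c else G k i) j : ℝ))))
          = μ k * (∑ i ∈ B, (x i j - (G k i j : ℝ))) := by
        intro k
        rw [Finset.sum_congr rfl fun c _ => by
          rw [herr k c j]]
        have e1 : ∀ c : κ, μ k * w c * ((x a j - (p c j : ℝ)) + ∑ i ∈ B, (x i j - (G k i j : ℝ)))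
            = μ k * (-(w c * ((p c j : ℝ) - x a j))) +
              (μ k * (∑ i ∈ B, (x i j - (G k i j : ℝ)))) * w c := fun c => by ring
        rw [Finset.sum_congr rfl fun c _ => e1 c, Finset.sum_add_distrib, ← Finset.mul_sum,
          ← Finset.mul_sum, Finset.sum_neg_distrib, hmean1 j, hw1]
        ring
      rw [Finset.sum_congr rfl fun k _ => hterm k]
      exact hmean j
    · intro j
      rw [Fintype.sum_prod_type]
      have hterm : ∀ k : ι, (∑ c : κ, μ k * w c *
          (∑ i ∈ insert a B, (x i j - ((if i = a then p c else G k i) j : ℝ)))^2)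
          ≤ μ k * (1/4) + μ k * (∑ i ∈ B, (x i j - (G k i j : ℝ)))^2 := by
        intro k
        rw [Finset.sum_congr rfl fun c _ => by rw [herr k c j]]
        set e : ℝ := ∑ i ∈ B, (x i j - (G k i j : ℝ)) with he
        have e1 : ∀ c : κ, μ k * w c * ((x a j - (p c j : ℝ)) + e)^2
            = μ k * (w c * (x a j - (p c j : ℝ))^2)
              + (2 * μ k * e) * (-(w c * ((p c j : ℝ) - x a j)))
              + (μ k * e^2) * w c := fun c => by ring
        rw [Finset.sum_congr rfl fun c _ => e1 c, Finset.sum_add_distrib,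
          Finset.sum_add_distrib, ← Finset.mul_sum, ← Finset.mul_sum, ← Finset.mul_sum,
          Finset.sum_neg_distrib, hmean1 j, hw1]
        have := hvar1 j
        have hμk := hμ0 k
        nlinarith
      calc ∑ k : ι, (∑ c : κ, μ k * w c *
            (∑ i ∈ insert a B, (x i j - ((if i = a then p c else G k i) j : ℝ)))^2)
          ≤ ∑ k : ι, (μ k * (1/4) + μ k * (∑ i ∈ B, (x i j - (G k i j : ℝ)))^2) :=
            Finset.sum_le_sum fun k _ => hterm k
        _ ≤ (B.card : ℝ)/4 + 1/4 := by
            rw [Finset.sum_add_distrib, ← Finset.sum_mul, hμ1]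
            have := hvar j
            linarith
        _ ≤ ((insert a B).card : ℝ)/4 := by
            rw [Finset.card_insert_of_notMem ha]
            push_cast
            linarith

lemma mem_set_sum {γ E : Type} [AddCommMonoid E] (s : Finset γ) (T : γ → Set E) (v : E) :
    v ∈ (∑ i ∈ s, T i) ↔ ∃ g : γ → E, (∀ i ∈ s, g i ∈ T i) ∧ v = ∑ i ∈ s, g i := by
  classical
  induction s using Finset.induction_on generalizing v with
  | empty =>
    simp only [Finset.sum_empty, Set.mem_zero]
    constructor
    · rintro rfl; exact ⟨fun _ => 0, fun i hi => absurd hi (Finset.notMem_empty i), rfl⟩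
    · rintro ⟨g, -, rfl⟩; rfl
  | @insert a s ha ih =>
    rw [Finset.sum_insert ha, Set.mem_add]
    constructor
    · rintro ⟨u, hu, vv, hvv, rfl⟩
      obtain ⟨g, hg, rfl⟩ := (ih vv).mp hvv
      refine ⟨Function.update g a u, ?_, ?_⟩
      · intro i hi
        rcases Finset.mem_insert.mp hi with rfl | his
        · rwa [Function.update_self]
        · rw [Function.update_of_ne (fun hc => ha (by rwa [hc] at his))]; exact hg i his
      · rw [Finset.sum_insert ha, Function.update_self]
        congr 1
        exact Finset.sum_congr rfl fun i hi =>
          (Function.update_of_ne (fun hc => ha (by rwa [hc] at hi)) u g).symm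
    · rintro ⟨g, hg, rfl⟩
      rw [Finset.sum_insert ha]
      exact ⟨g a, hg a (Finset.mem_insert_self a s), ∑ i ∈ s, g i,
        (ih _).mpr ⟨g, fun i hi => hg i (Finset.mem_insert_of_mem hi), rfl⟩, rfl⟩


lemma euc_sum_apply {n γ : Type*} [Fintype n] (s : Finset γ)
    (f : γ → EuclideanSpace ℝ n) (j : n) : (∑ i ∈ s, f i) j = ∑ i ∈ s, f i j :=
  by rw [WithLp.ofLp_sum]; exact Finset.sum_apply j s _

lemma coeZE_sum {n m : ℕ} (f : Fin m → (Fin n → ℤ)) :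
    coeZE (∑ i, f i) = ∑ i, coeZE (f i) := by
  refine PiLp.ext fun j => ?_
  rw [euc_sum_apply]
  show ((∑ i, f i) j : ℝ) = ∑ i, ((f i j : ℤ) : ℝ)
  rw [Finset.sum_apply]
  push_cast
  rfl

lemma image_minkSumZ {n m : ℕ} (S : Fin m → Set (Fin n → ℤ)) :
    coeZE '' minkSumZ S = ∑ i, (coeZE '' S i) := by
  ext v
  rw [mem_set_sum]
  constructor
  · rintro ⟨zz, ⟨z, hz, rfl⟩, rfl⟩
    exact ⟨fun i => coeZE (z i), fun i _ => Set.mem_image_of_mem _ (hz i),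
      coeZE_sum z⟩
  · rintro ⟨g, hg, rfl⟩
    have : ∀ i, ∃ z, z ∈ S i ∧ coeZE z = g i := fun i => hg i (Finset.mem_univ i)
    choose z hz hze using this
    refine ⟨∑ i, z i, ⟨z, hz, rfl⟩, ?_⟩
    rw [coeZE_sum]
    exact Finset.sum_congr rfl fun i _ => hze i

/-- Shapley–Folkman-type theorem for integrally convex sets (ℓ² bound). -/
theorem stmt11 {n m : ℕ} (hn : 1 ≤ n) (hm : 1 ≤ m)
    (S : Fin m → Set (Fin n → ℤ)) (hS : ∀ i, IntegrallyConvex (S i))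
    (x : EuclideanSpace ℝ (Fin n)) (hx : x ∈ convexHull ℝ (coeZE '' minkSumZ S)) :
    ∃ z ∈ minkSumZ S, ‖x - coeZE z‖ ≤ (1 / 2) * Real.sqrt (n * min n m) := by
  classical
  rw [image_minkSumZ, convexHull_sum, mem_set_sum] at hx
  obtain ⟨xs, hxs, hxeq⟩ := hx
  obtain ⟨y, hyconv, hysum, hycard⟩ := shapley_folkman (fun i => coeZE '' S i) xs
    (fun i => hxs i (Finset.mem_univ i))
  rw [finrank_euclideanSpace_fin] at hycard
  set B : Finset (Fin m) := Finset.univ.filter (fun i => y i ∉ coeZE '' S i) with hB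
  have hbad : ∀ i ∈ B, ((fun i => (y i : Fin n → ℝ)) i) ∈
      convexHull ℝ (coeZR '' ((fun i => S i ∩ intNbhd (y i)) i)) ∧
      ∀ p ∈ (fun i => S i ∩ intNbhd (y i)) i, ∀ j, |y i j - (p j : ℝ)| < 1 := by
    intro i _
    refine ⟨?_, fun p hp j => hp.2 j⟩
    have h1 := (WithLp.linearEquiv 2 ℝ (Fin n → ℝ)).toLinearMap.image_convexHull (coeZE '' S i)
    have h2 : (WithLp.linearEquiv 2 ℝ (Fin n → ℝ)).toLinearMap '' (coeZE '' S i) = coeZR '' S i := by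
      rw [Set.image_image]; rfl
    exact (hS i).2 (y i) (by rw [← h2, ← h1]; exact Set.mem_image_of_mem _ (hyconv i))
  obtain ⟨ι, hι, μ, G, hμ0, hμ1, hGP, hmean, hvar⟩ :=
    avg_rep (fun i => S i ∩ intNbhd (y i)) (fun i => (y i : Fin n → ℝ)) B hbad
  -- extract a realization with small total squared error
  have hswap : (∑ k, μ k * (∑ j, (∑ i ∈ B, (y i j - (G k i j : ℝ)))^2)) ≤
      (n : ℝ) * B.card / 4 := by
    have e1 : ∀ k, μ k * (∑ j, (∑ i ∈ B, (y i j - (G k i j : ℝ)))^2)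
        = ∑ j, μ k * (∑ i ∈ B, (y i j - (G k i j : ℝ)))^2 := fun k => Finset.mul_sum _ _ _
    rw [Finset.sum_congr rfl fun k _ => e1 k, Finset.sum_comm]
    calc (∑ j : Fin n, ∑ k, μ k * (∑ i ∈ B, (y i j - (G k i j : ℝ)))^2)
        ≤ ∑ _j : Fin n, (B.card : ℝ)/4 := Finset.sum_le_sum fun j _ => hvar j
      _ = (n : ℝ) * B.card / 4 := by
          rw [Finset.sum_const, Finset.card_univ, Fintype.card_fin, nsmul_eq_mul]; ring
  have hexk : ∃ k, (∑ j, (∑ i ∈ B, (y i j - (G k i j : ℝ)))^2) ≤ (n : ℝ) * B.card / 4 := by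
    by_contra hc
    push_neg at hc
    obtain ⟨k₀, hk₀⟩ : ∃ k, 0 < μ k := by
      by_contra hc2; push_neg at hc2
      have h0 : ∑ k, μ k = 0 := Finset.sum_eq_zero fun k _ => le_antisymm (hc2 k) (hμ0 k)
      rw [hμ1] at h0; norm_num at h0
    have hlt : ∑ k, μ k * ((n : ℝ) * B.card / 4) <
        ∑ k, μ k * (∑ j, (∑ i ∈ B, (y i j - (G k i j : ℝ)))^2) := by
      apply Finset.sum_lt_sum
      · exact fun k _ => mul_le_mul_of_nonneg_left (le_of_lt (hc k)) (hμ0 k)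
      · exact ⟨k₀, Finset.mem_univ _, mul_lt_mul_of_pos_left (hc k₀) hk₀⟩
    rw [← Finset.sum_mul, hμ1, one_mul] at hlt
    linarith
  obtain ⟨k, hk⟩ := hexk
  -- choose integer points
  have hgood : ∀ i, ∃ u : Fin n → ℤ, u ∈ S i ∧ (i ∉ B → coeZE u = y i) := by
    intro i
    by_cases h : i ∈ B
    · obtain ⟨u, hu⟩ := (hS i).1; exact ⟨u, hu, fun hc => absurd h hc⟩
    · have hyi : ¬ (y i ∉ coeZE '' S i) := fun hc =>
        h (by rw [hB]; exact Finset.mem_filter.mpr ⟨Finset.mem_univ i, hc⟩)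
      obtain ⟨uu, huu, huue⟩ := not_not.mp hyi
      exact ⟨uu, huu, fun _ => huue⟩
  choose u hu hue using hgood
  set zf : Fin m → (Fin n → ℤ) := fun i => if i ∈ B then G k i else u i with hzf
  have hzS : ∀ i, zf i ∈ S i := by
    intro i; rw [hzf]; by_cases h : i ∈ B
    · simp only [if_pos h]; exact (hGP k i h).1
    · simp only [if_neg h]; exact hu i
  refine ⟨∑ i, zf i, ⟨zf, hzS, rfl⟩, ?_⟩
  have hxy : x = ∑ i, y i := by rw [hysum, ← hxeq]
  have herr : ∀ j, (x - coeZE (∑ i, zf i)) j = ∑ i ∈ B, (y i j - (G k i j : ℝ)) := by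
    intro j
    have h1 : (x - coeZE (∑ i, zf i)) j = (∑ i, y i) j - (∑ i, coeZE (zf i)) j := by
      rw [hxy, coeZE_sum]; rfl
    rw [h1, euc_sum_apply, euc_sum_apply, ← Finset.sum_sub_distrib]
    have h2 : ∑ i ∈ B, (y i j - (G k i j : ℝ)) = ∑ i ∈ B, (y i j - coeZE (zf i) j) := by
      refine Finset.sum_congr rfl fun i hi => ?_
      rw [hzf]; simp only [if_pos hi]; rfl
    rw [h2]
    refine (Finset.sum_subset (Finset.subset_univ B) fun i _ hi => ?_).symm
    have he : coeZE (u i) = y i := hue i hi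
    have hz : zf i = u i := by rw [hzf]; simp only [if_neg hi]
    rw [hz, ← he, sub_self]
  have hnorm : ‖x - coeZE (∑ i, zf i)‖ =
      Real.sqrt (∑ j, (∑ i ∈ B, (y i j - (G k i j : ℝ)))^2) := by
    rw [EuclideanSpace.norm_eq]
    congr 1
    refine Finset.sum_congr rfl fun j _ => ?_
    rw [herr j, Real.norm_eq_abs, sq_abs]
  rw [hnorm]
  have hBn : B.card ≤ n := hycard
  have hBm : B.card ≤ m := le_trans (Finset.card_le_univ B) (by simp)
  have hBmin : (B.card : ℝ) ≤ ((min n m : ℕ) : ℝ) := by exact_mod_cast le_min hBn hBm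
  have hb1 : (∑ j, (∑ i ∈ B, (y i j - (G k i j : ℝ)))^2) ≤
      (n : ℝ) * ((min n m : ℕ) : ℝ) / 4 := by
    refine le_trans hk ?_
    have hn0 : (0:ℝ) ≤ (n:ℝ) := Nat.cast_nonneg n
    nlinarith
  refine le_trans (Real.sqrt_le_sqrt hb1) (le_of_eq ?_)
  rw [show ((n : ℝ) * ((min n m : ℕ) : ℝ) / 4) = ((1/2)^2) * ((n : ℝ) * ((min n m : ℕ) : ℝ))
      by ring,
    Real.sqrt_mul (by positivity) , Real.sqrt_sq (by norm_num : (0:ℝ) ≤ 1/2)]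
end
end
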